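/- arXiv:1807.09933 — 5 statements merged into one kernel-verified Lean document; each statement's English description precedes it below -/
import Mathlib

section
/- In QI(ℝ), the subgroups Q₊ and Q₋ intersect trivially, and Q⁺ is the internal direct product Q₊ × Q₋. -/
/-- `f` is a `K`-quasi-isometric embedding. -/
def QIEmb {X Y : Type*} [PseudoMetricSpace X] [PseudoMetricSpace Y] (K : ℝ) (f : X → Y) : Prop :=
  1 < K ∧ ∀ x₁ x₂ : X, dist x₁ x₂ / K - K ≤ dist (f x₁) (f x₂) ∧
    dist (f x₁) (f x₂) ≤ K * dist x₁ x₂ + K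

/-- `f` is a `K`-quasi-isometry: a `K`-quasi-isometric embedding with `K`-dense image. -/
def QIsom {X Y : Type*} [PseudoMetricSpace X] [PseudoMetricSpace Y] (K : ℝ) (f : X → Y) : Prop :=
  QIEmb K f ∧ ∀ y : Y, ∃ x : X, dist (f x) y < K

/-- `f` is a quasi-isometry for some constant `K > 1`. -/
def IsQI {X Y : Type*} [PseudoMetricSpace X] [PseudoMetricSpace Y] (f : X → Y) : Prop :=
  ∃ K : ℝ, QIsom K f

/-- Two maps are equivalent (close) if they are within bounded sup-distance. -/
def Close {X Y : Type*} [PseudoMetricSpace X] [PseudoMetricSpace Y] (f g : X → Y) : Prop :=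
  ∃ M : ℝ, ∀ x : X, dist (f x) (g x) ≤ M

/-- `f` is piecewise linear: near every point it is affine on both sides
(so the break points form a discrete set). -/
def IsPL (f : ℝ → ℝ) : Prop :=
  ∀ x : ℝ, ∃ ε > (0:ℝ), ∃ a b c d : ℝ,
    (∀ t ∈ Set.Icc (x - ε) x, f t = a * t + b) ∧
    (∀ t ∈ Set.Icc x (x + ε), f t = c * t + d)

/-- The set of slopes `Λ(f)` of a piecewise linear map. -/
def slopes (f : ℝ → ℝ) : Set ℝ :=
  {a : ℝ | ∃ b x y : ℝ, x < y ∧ ∀ t ∈ Set.Icc x y, f t = a * t + b}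

/-- `f ∈ PL_δ(ℝ)`: a piecewise linear homeomorphism of `ℝ` whose slope set is bounded
away from `0` and `∞`. -/
def IsPLd (f : ℝ → ℝ) : Prop :=
  IsPL f ∧ Function.Bijective f ∧
    ∃ M : ℝ, 1 < M ∧ ∀ a ∈ slopes f, M⁻¹ < |a| ∧ |a| < M

/-- `f` is the identity near `-∞`. -/
def IdNearNegInf (f : ℝ → ℝ) : Prop := ∃ N : ℝ, ∀ t ≤ N, f t = t

/-- `f` is the identity near `+∞`. -/
def IdNearPosInf (f : ℝ → ℝ) : Prop := ∃ N : ℝ, ∀ t ≥ N, f t = t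

open Set Function

lemma IsPL.continuous {f : ℝ → ℝ} (hf : IsPL f) : Continuous f := by
  rw [continuous_iff_continuousAt]
  intro x
  obtain ⟨ε, hε, a, b, c, d, hl, hr⟩ := hf x
  have hfx1 : f x = a * x + b := hl x ⟨by linarith, le_refl x⟩
  have hfx2 : f x = c * x + d := hr x ⟨le_refl x, by linarith⟩
  rw [Metric.continuousAt_iff]
  intro δ hδ
  set L := max |a| |c| + 1 with hL
  have hL0 : 0 < L := by positivity
  have hLa : |a| ≤ L := le_trans (le_max_left _ _) (by linarith)
  have hLc : |c| ≤ L := le_trans (le_max_right _ _) (by linarith)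
  refine ⟨min ε (δ / L), by positivity, ?_⟩
  intro t ht
  have ht1 : dist t x < ε := lt_of_lt_of_le ht (min_le_left _ _)
  have ht2 : dist t x < δ / L := lt_of_lt_of_le ht (min_le_right _ _)
  rw [Real.dist_eq] at ht1 ht2 ⊢
  have habs := abs_lt.1 ht1
  rcases le_total t x with h | h
  · have h1 : f t = a * t + b := hl t ⟨by linarith [habs.1], h⟩
    have h2 : f t - f x = a * (t - x) := by rw [h1, hfx1]; ring
    rw [h2, abs_mul]
    calc |a| * |t - x| ≤ L * |t - x| := by gcongr
      _ < L * (δ / L) := by apply mul_lt_mul_of_pos_left ht2 hL0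
      _ = δ := by field_simp
  · have h1 : f t = c * t + d := hr t ⟨h, by linarith [habs.2]⟩
    have h2 : f t - f x = c * (t - x) := by rw [h1, hfx2]; ring
    rw [h2, abs_mul]
    calc |c| * |t - x| ≤ L * |t - x| := by gcongr
      _ < L * (δ / L) := by apply mul_lt_mul_of_pos_left ht2 hL0
      _ = δ := by field_simp

lemma Close.symm' {X Y : Type*} [PseudoMetricSpace X] [PseudoMetricSpace Y] {f g : X → Y}
    (h : Close f g) : Close g f := by
  obtain ⟨M, hM⟩ := h
  exact ⟨M, fun x => by rw [dist_comm]; exact hM x⟩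

lemma Close.trans' {X Y : Type*} [PseudoMetricSpace X] [PseudoMetricSpace Y] {f g h : X → Y}
    (h1 : Close f g) (h2 : Close g h) : Close f h := by
  obtain ⟨M, hM⟩ := h1
  obtain ⟨M', hM'⟩ := h2
  exact ⟨M + M', fun x => le_trans (dist_triangle _ (g x) _) (add_le_add (hM x) (hM' x))⟩

lemma close_of_outside {f g : ℝ → ℝ} (hf : Continuous f) (hg : Continuous g)
    {A B M : ℝ} (h : ∀ t, t < A ∨ B < t → dist (f t) (g t) ≤ M) : Close f g := by
  by_cases hAB : A ≤ B
  · obtain ⟨x, -, hx⟩ := isCompact_Icc.exists_isMaxOn (nonempty_Icc.2 hAB)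
      ((hf.dist hg).continuousOn)
    refine ⟨max M (dist (f x) (g x)), fun t => ?_⟩
    by_cases ht : t ∈ Icc A B
    · exact le_trans (hx ht) (le_max_right _ _)
    · rw [mem_Icc, not_and_or, not_le, not_le] at ht
      refine le_trans (h t ?_) (le_max_left _ _)
      rcases ht with ht | ht
      · exact Or.inl ht
      · exact Or.inr ht
  · refine ⟨M, fun t => h t ?_⟩
    push_neg at hAB
    rcases le_total t B with ht | ht
    · exact Or.inl (lt_of_le_of_lt ht hAB)
    · rcases lt_or_ge B t with h' | h'
      · exact Or.inr h'
      · exact Or.inl (lt_of_le_of_lt h' hAB)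

noncomputable def glue (g h : ℝ → ℝ) (p q : ℝ) (t : ℝ) : ℝ :=
  if t ≤ p then g t
  else if t ≤ q then ((h q - g p) / (q - p)) * t + (g p - ((h q - g p) / (q - p)) * p)
  else h t

section Glue

variable {g h : ℝ → ℝ} {p q : ℝ}

lemma glue_left {t : ℝ} (ht : t ≤ p) : glue g h p q t = g t := by
  simp [glue, ht]

lemma glue_mid (hpq : p < q) {t : ℝ} (h1 : p ≤ t) (h2 : t ≤ q) :
    glue g h p q t = ((h q - g p) / (q - p)) * t + (g p - ((h q - g p) / (q - p)) * p) := by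
  unfold glue
  by_cases ht : t ≤ p
  · have : t = p := le_antisymm ht h1
    subst this
    simp only [le_refl, if_pos]
    ring
  · rw [if_neg ht, if_pos h2]

lemma glue_right (hpq : p < q) {t : ℝ} (ht : q ≤ t) : glue g h p q t = h t := by
  unfold glue
  have h1 : ¬ t ≤ p := by linarith
  rw [if_neg h1]
  by_cases h2 : t ≤ q
  · have htq : t = q := le_antisymm h2 ht
    rw [if_pos h2, htq]
    have hq : q - p ≠ 0 := sub_ne_zero.mpr hpq.ne'
    field_simp
    ring
  · rw [if_neg h2]

lemma glue_strictMono (hpq : p < q) (hgh : g p < h q)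
    (hgm : StrictMono g) (hhm : StrictMono h) : StrictMono (glue g h p q) := by
  set s := (h q - g p) / (q - p) with hs
  have hs0 : 0 < s := div_pos (by linarith) (by linarith)
  intro x y hxy
  rcases le_or_gt y p with hyp | hyp
  · rw [glue_left (le_of_lt (lt_of_lt_of_le hxy hyp)), glue_left hyp]
    exact hgm hxy
  · rcases le_or_gt y q with hyq | hyq
    · rw [glue_mid hpq (le_of_lt hyp) hyq]
      rcases le_or_gt x p with hxp | hxp
      · rw [glue_left hxp]
        have h1 : g x ≤ g p := hgm.monotone hxp
        have h2 : s * p + (g p - s * p) < s * y + (g p - s * p) := by nlinarith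
        nlinarith
      · rw [glue_mid hpq (le_of_lt hxp) (by linarith)]
        nlinarith
    · rw [glue_right hpq (le_of_lt hyq)]
      have hhy : h q < h y := hhm hyq
      rcases le_or_gt x p with hxp | hxp
      · rw [glue_left hxp]
        have : g x ≤ g p := hgm.monotone hxp
        linarith
      · rcases le_or_gt x q with hxq | hxq
        · rw [glue_mid hpq (le_of_lt hxp) hxq]
          have : s * x + (g p - s * p) ≤ s * q + (g p - s * p) := by nlinarith
          have hq : s * q + (g p - s * p) = h q := by
            have hne : q - p ≠ 0 := sub_ne_zero.mpr hpq.ne'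
            rw [hs]; field_simp; ring
          linarith
        · rw [glue_right hpq (le_of_lt hxq)]
          exact hhm hxy

lemma glue_isPL (hpq : p < q) (hg : IsPL g) (hh : IsPL h) : IsPL (glue g h p q) := by
  set s := (h q - g p) / (q - p) with hs
  set c := g p - s * p with hc
  intro x
  rcases lt_trichotomy x p with hxp | hxp | hxp
  · obtain ⟨ε, hε, a, b, c', d', hl, hr⟩ := hg x
    refine ⟨min ε (p - x), lt_min hε (by linarith), a, b, c', d', ?_, ?_⟩
    · intro t ht
      rw [glue_left (le_trans ht.2 (le_of_lt hxp))]
      exact hl t ⟨by have := min_le_left ε (p - x); simp only [mem_Icc] at ht ⊢; linarith [ht.1], ht.2⟩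
    · intro t ht
      have h2 : t ≤ p := by have := min_le_right ε (p - x); simp only [mem_Icc] at ht; linarith [ht.2]
      rw [glue_left h2]
      exact hr t ⟨ht.1, by have := min_le_left ε (p - x); simp only [mem_Icc] at ht; linarith [ht.2]⟩
  · subst hxp
    obtain ⟨ε, hε, a, b, c', d', hl, hr⟩ := hg x
    refine ⟨min ε (q - x), lt_min hε (by linarith), a, b, s, c, ?_, ?_⟩
    · intro t ht
      rw [glue_left ht.2]
      exact hl t ⟨by have := min_le_left ε (q - x); simp only [mem_Icc] at ht ⊢; linarith [ht.1], ht.2⟩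
    · intro t ht
      rw [glue_mid hpq ht.1 (by have := min_le_right ε (q - x); simp only [mem_Icc] at ht; linarith [ht.2])]
  · rcases lt_trichotomy x q with hxq | hxq | hxq
    · refine ⟨min (x - p) (q - x), lt_min (by linarith) (by linarith), s, c, s, c, ?_, ?_⟩
      · intro t ht
        have h1 := min_le_left (x - p) (q - x)
        simp only [mem_Icc] at ht
        rw [glue_mid hpq (by linarith [ht.1]) (by linarith [ht.2, min_le_right (x - p) (q - x)])]
      · intro t ht
        have h1 := min_le_right (x - p) (q - x)
        simp only [mem_Icc] at ht
        rw [glue_mid hpq (by linarith [ht.1, min_le_left (x - p) (q - x)]) (by linarith [ht.2])]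
    · subst hxq
      obtain ⟨ε, hε, a, b, c', d', hl, hr⟩ := hh x
      refine ⟨min ε (x - p), lt_min hε (by linarith), s, c, c', d', ?_, ?_⟩
      · intro t ht
        simp only [mem_Icc] at ht
        rw [glue_mid hpq (by linarith [ht.1, min_le_right ε (x - p)]) ht.2]
      · intro t ht
        simp only [mem_Icc] at ht
        rw [glue_right hpq ht.1]
        exact hr t ⟨ht.1, by linarith [ht.2, min_le_left ε (x - p)]⟩
    · obtain ⟨ε, hε, a, b, c', d', hl, hr⟩ := hh x
      refine ⟨min ε (x - q), lt_min hε (by linarith), a, b, c', d', ?_, ?_⟩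
      · intro t ht
        simp only [mem_Icc] at ht
        have h2 : q ≤ t := by linarith [ht.1, min_le_right ε (x - q)]
        rw [glue_right hpq h2]
        exact hl t ⟨by linarith [ht.1, min_le_left ε (x - q)], ht.2⟩
      · intro t ht
        simp only [mem_Icc] at ht
        rw [glue_right hpq (by linarith [ht.1])]
        exact hr t ⟨ht.1, by linarith [ht.2, min_le_left ε (x - q)]⟩

lemma glue_surjective (hpq : p < q) (hgh : g p < h q) (hgm : StrictMono g) (hhm : StrictMono h)
    (hg : IsPL g) (hh : IsPL h) (hgs : Surjective g) (hhs : Surjective h) :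
    Surjective (glue g h p q) := by
  intro z
  obtain ⟨x0, hx0⟩ := hgs z
  obtain ⟨y0, hy0⟩ := hhs z
  set x := min x0 p with hx
  set y := max y0 q with hy
  have hxy : x ≤ y := le_trans (min_le_right _ _) (le_trans (le_of_lt hpq) (le_max_right _ _))
  have h1 : glue g h p q x = g x := glue_left (min_le_right _ _)
  have h2 : glue g h p q y = h y := glue_right hpq (le_max_right _ _)
  have hcont : ContinuousOn (glue g h p q) (Icc x y) :=
    ((glue_isPL hpq hg hh).continuous).continuousOn
  have hz : z ∈ Icc (glue g h p q x) (glue g h p q y) := by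
    rw [h1, h2]
    constructor
    · calc g x ≤ g x0 := hgm.monotone (min_le_left _ _)
        _ = z := hx0
    · calc z = h y0 := hy0.symm
        _ ≤ h y := hhm.monotone (le_max_left _ _)
  obtain ⟨t, _, ht⟩ := intermediate_value_Icc hxy hcont hz
  exact ⟨t, ht⟩

lemma glue_slopes (hpq : p < q) :
    slopes (glue g h p q) ⊆ slopes g ∪ {(h q - g p) / (q - p)} ∪ slopes h := by
  set s := (h q - g p) / (q - p) with hs
  rintro A ⟨B, x, y, hxy, hA⟩
  rcases lt_or_ge x p with hxp | hxp
  · left; left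
    set m := min y p with hm
    have hxm : x < m := lt_min hxy hxp
    refine ⟨B, x, m, hxm, fun t ht => ?_⟩
    have h1 : t ≤ p := le_trans ht.2 (min_le_right _ _)
    have h2 := hA t ⟨ht.1, le_trans ht.2 (min_le_left _ _)⟩
    rw [glue_left h1] at h2
    exact h2
  · rcases lt_or_ge x q with hxq | hxq
    · left; right
      set m := min y q with hm
      have hxm : x < m := lt_min hxy hxq
      have e1 := hA x ⟨le_rfl, le_of_lt hxy⟩
      have e2 := hA m ⟨le_of_lt hxm, min_le_left _ _⟩
      rw [glue_mid hpq hxp (le_of_lt hxq)] at e1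
      rw [glue_mid hpq (le_trans hxp (le_of_lt hxm)) (min_le_right _ _)] at e2
      have : (s - A) * (x - m) = 0 := by linear_combination e1 - e2
      rcases mul_eq_zero.1 this with h' | h'
      · have : A = s := by linarith
        simp [this]
      · exfalso; have : x = m := by linarith
        exact absurd this (ne_of_lt hxm)
    · right
      refine ⟨B, x, y, hxy, fun t ht => ?_⟩
      have h1 : q ≤ t := le_trans hxq ht.1
      have h2 := hA t ht
      rw [glue_right hpq h1] at h2
      exact h2

end Glue

lemma isPL_id : IsPL (id : ℝ → ℝ) :=
  fun _ => ⟨1, one_pos, 1, 0, 1, 0, fun t _ => by simp, fun t _ => by simp⟩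

lemma slopes_id : slopes (id : ℝ → ℝ) ⊆ {1} := by
  rintro A ⟨B, x, y, hxy, hA⟩
  have e1 := hA x ⟨le_rfl, le_of_lt hxy⟩
  have e2 := hA y ⟨le_of_lt hxy, le_rfl⟩
  simp only [id_eq] at e1 e2
  have : (1 - A) * (x - y) = 0 := by linear_combination e1 - e2
  rcases mul_eq_zero.1 this with h' | h'
  · have : A = 1 := by linarith
    simp [this]
  · exfalso; exact absurd (by linarith : x = y) (ne_of_lt hxy)

lemma glue_slopes_bound {g h : ℝ → ℝ} {p q M : ℝ} (hpq : p < q) (hgh : g p < h q)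
    (hM : 1 < M) (hg : ∀ A ∈ slopes g, M⁻¹ < |A| ∧ |A| < M)
    (hh : ∀ A ∈ slopes h, M⁻¹ < |A| ∧ |A| < M) :
    ∃ M' : ℝ, 1 < M' ∧ ∀ A ∈ slopes (glue g h p q), M'⁻¹ < |A| ∧ |A| < M' := by
  set s := (h q - g p) / (q - p) with hs
  have hs0 : 0 < s := div_pos (by linarith) (by linarith)
  set M' := M + s + s⁻¹ with hM'
  have hsi : 0 < s⁻¹ := inv_pos.2 hs0
  have hM'1 : 1 < M' := by rw [hM']; linarith
  have hM'0 : 0 < M' := by linarith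
  refine ⟨M', hM'1, fun A hA => ?_⟩
  have := glue_slopes hpq hA
  rcases this with (hA' | hA') | hA'
  · rcases hg A hA' with ⟨h1, h2⟩
    constructor
    · calc M'⁻¹ ≤ M⁻¹ := inv_anti₀ (by linarith) (by rw [hM']; linarith)
        _ < |A| := h1
    · calc |A| < M := h2
        _ ≤ M' := by rw [hM']; linarith
  · have hAs : A = s := hA'
    subst hAs
    rw [abs_of_pos hs0]
    constructor
    · exact inv_lt_of_inv_lt₀ hs0 (by rw [hM']; linarith)
    · rw [hM']; linarith
  · rcases hh A hA' with ⟨h1, h2⟩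
    constructor
    · calc M'⁻¹ ≤ M⁻¹ := inv_anti₀ (by linarith) (by rw [hM']; linarith)
        _ < |A| := h1
    · calc |A| < M := h2
        _ ≤ M' := by rw [hM']; linarith

/-- In `QI(ℝ)`: the subgroups `Q₊` and `Q₋` intersect trivially, and `Q⁺` is the internal
direct product `Q₊ × Q₋`: every orientation-preserving class decomposes as a commuting
product of a `Q₊`-class and a `Q₋`-class, uniquely up to equivalence. -/
theorem Qplus_Qminus_direct_product :
    (∀ f g : ℝ → ℝ, IsPLd f → IdNearNegInf f → IsPLd g → IdNearPosInf g →
      Close f g → Close f (id : ℝ → ℝ)) ∧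
    (∀ f : ℝ → ℝ, IsPLd f → StrictMono f →
      ∃ fp fm : ℝ → ℝ, IsPLd fp ∧ IdNearNegInf fp ∧ IsPLd fm ∧ IdNearPosInf fm ∧
        Close f (fp ∘ fm) ∧ Close (fp ∘ fm) (fm ∘ fp) ∧
        ∀ fp' fm' : ℝ → ℝ, IsPLd fp' → IdNearNegInf fp' → IsPLd fm' → IdNearPosInf fm' →
          Close f (fp' ∘ fm') → Close fp fp' ∧ Close fm fm') := by
  constructor
  · -- trivial intersection
    rintro f g hf ⟨Nf, hNf⟩ hg ⟨Ng, hNg⟩ ⟨M, hM⟩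
    apply close_of_outside (hf.1.continuous) continuous_id (A := Nf) (B := Ng) (M := max M 0)
    intro t ht
    rcases ht with ht | ht
    · rw [hNf t (le_of_lt ht)]
      simp
    · have : g t = t := hNg t (le_of_lt ht)
      calc dist (f t) (id t) = dist (f t) (g t) := by rw [this, id_eq]
        _ ≤ M := hM t
        _ ≤ max M 0 := le_max_left _ _
  · -- decomposition
    intro f hf hfm
    obtain ⟨hfPL, hfbij, Mf, hMf1, hMf⟩ := hf
    have hfsurj : Function.Surjective f := hfbij.2
    set a0 : ℝ := min 0 (f 0) - 1 with ha0def
    set b0 : ℝ := max 0 (f 0) + 1 with hb0def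
    have ha0 : a0 < 0 := by
      rw [ha0def]; have := min_le_left 0 (f 0); linarith
    have ha0f : a0 < f 0 := by
      rw [ha0def]; have := min_le_right 0 (f 0); linarith
    have hb0 : 0 < b0 := by
      rw [hb0def]; have := le_max_left 0 (f 0); linarith
    have hfb0 : f 0 < b0 := by
      rw [hb0def]; have := le_max_right 0 (f 0); linarith
    set fp : ℝ → ℝ := glue id f a0 0 with hfpdef
    set fm : ℝ → ℝ := glue f id 0 b0 with hfmdef
    have hgh1 : (id : ℝ → ℝ) a0 < f 0 := ha0f
    have hgh2 : f 0 < (id : ℝ → ℝ) b0 := hfb0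
    have hfpPL : IsPL fp := glue_isPL ha0 isPL_id hfPL
    have hfmPL : IsPL fm := glue_isPL hb0 hfPL isPL_id
    have hfpMono : StrictMono fp := glue_strictMono ha0 hgh1 strictMono_id hfm
    have hfmMono : StrictMono fm := glue_strictMono hb0 hgh2 hfm strictMono_id
    have hfpSurj : Function.Surjective fp :=
      glue_surjective ha0 hgh1 strictMono_id hfm isPL_id hfPL surjective_id hfsurj
    have hfmSurj : Function.Surjective fm :=
      glue_surjective hb0 hgh2 hfm strictMono_id hfPL isPL_id hfsurj surjective_id
    have hid_slopes : ∀ A ∈ slopes (id : ℝ → ℝ), Mf⁻¹ < |A| ∧ |A| < Mf := by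
      intro A hA
      have : A = 1 := slopes_id hA
      subst this
      rw [abs_one]
      exact ⟨inv_lt_one_of_one_lt₀ hMf1, hMf1⟩
    have hfpPLd : IsPLd fp :=
      ⟨hfpPL, ⟨hfpMono.injective, hfpSurj⟩,
        glue_slopes_bound ha0 hgh1 hMf1 hid_slopes hMf⟩
    have hfmPLd : IsPLd fm :=
      ⟨hfmPL, ⟨hfmMono.injective, hfmSurj⟩,
        glue_slopes_bound hb0 hgh2 hMf1 hMf hid_slopes⟩
    have hfpNeg : IdNearNegInf fp := ⟨a0, fun t ht => glue_left ht⟩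
    have hfmPos : IdNearPosInf fm := ⟨b0, fun t ht => glue_right hb0 ht⟩
    -- f t ≤ a0 for small t, f t ≥ b0 for large t
    obtain ⟨t0, ht0⟩ := hfsurj a0
    obtain ⟨t1, ht1⟩ := hfsurj b0
    have hfp_eq_pos : ∀ t : ℝ, 0 ≤ t → fp t = f t := fun t ht => glue_right ha0 ht
    have hfp_eq_neg : ∀ t : ℝ, t ≤ a0 → fp t = t := fun t ht => glue_left ht
    have hfm_eq_neg : ∀ t : ℝ, t ≤ 0 → fm t = f t := fun t ht => glue_left ht
    have hfm_eq_pos : ∀ t : ℝ, b0 ≤ t → fm t = t := fun t ht => glue_right hb0 ht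
    have hclose1 : Close f (fp ∘ fm) := by
      apply close_of_outside hfPL.continuous (hfpPL.continuous.comp hfmPL.continuous)
        (A := min t0 0) (B := b0) (M := 0)
      intro t ht
      rcases ht with ht | ht
      · have h1 : t ≤ 0 := le_of_lt (lt_of_lt_of_le ht (min_le_right _ _))
        have h2 : t ≤ t0 := le_of_lt (lt_of_lt_of_le ht (min_le_left _ _))
        have h3 : f t ≤ a0 := by rw [← ht0]; exact hfm.monotone h2
        have : (fp ∘ fm) t = f t := by
          simp only [Function.comp_apply, hfm_eq_neg t h1, hfp_eq_neg _ h3]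
        rw [this, dist_self]
      · have h1 : (fp ∘ fm) t = f t := by
          simp only [Function.comp_apply, hfm_eq_pos t (le_of_lt ht),
            hfp_eq_pos t (by linarith)]
        rw [h1, dist_self]
    have hclose2 : Close f (fm ∘ fp) := by
      apply close_of_outside hfPL.continuous (hfmPL.continuous.comp hfpPL.continuous)
        (A := a0) (B := max 0 t1) (M := 0)
      intro t ht
      rcases ht with ht | ht
      · have : (fm ∘ fp) t = f t := by
          simp only [Function.comp_apply, hfp_eq_neg t (le_of_lt ht),
            hfm_eq_neg t (by linarith)]
        rw [this, dist_self]
      · have h1 : 0 ≤ t := le_of_lt (lt_of_le_of_lt (le_max_left _ _) ht)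
        have h2 : t1 ≤ t := le_of_lt (lt_of_le_of_lt (le_max_right _ _) ht)
        have h3 : b0 ≤ f t := by rw [← ht1]; exact hfm.monotone h2
        have : (fm ∘ fp) t = f t := by
          simp only [Function.comp_apply, hfp_eq_pos t h1, hfm_eq_pos _ h3]
        rw [this, dist_self]
    refine ⟨fp, fm, hfpPLd, hfpNeg, hfmPLd, hfmPos, hclose1,
      (hclose1.symm').trans' hclose2, ?_⟩
    intro fp' fm' hfp' hfp'neg hfm' hfm'pos hclose'
    obtain ⟨M2, hM2⟩ := (hclose1.symm').trans' hclose'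
    obtain ⟨N2, hN2⟩ := hfm'pos
    obtain ⟨N4, hN4⟩ := hfp'neg
    have cfp' : Continuous fp' := hfp'.1.continuous
    have cfm' : Continuous fm' := hfm'.1.continuous
    have hfm'mono : StrictMono fm' := by
      rcases cfm'.strictMono_of_inj hfm'.2.1.1 with h' | h'
      · exact h'
      · exfalso
        have e1 : fm' N2 = N2 := hN2 N2 le_rfl
        have e2 : fm' (N2 + 1) = N2 + 1 := hN2 (N2 + 1) (by linarith)
        have := h' (show N2 < N2 + 1 by linarith)
        rw [e1, e2] at this
        linarith
    obtain ⟨u, hu⟩ := hfm'.2.1.2 N4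
    constructor
    · apply close_of_outside hfpPL.continuous cfp'
        (A := min a0 N4) (B := max b0 N2) (M := max M2 0)
      intro t ht
      rcases ht with ht | ht
      · have h1 : t ≤ a0 := le_of_lt (lt_of_lt_of_le ht (min_le_left _ _))
        have h2 : t ≤ N4 := le_of_lt (lt_of_lt_of_le ht (min_le_right _ _))
        rw [hfp_eq_neg t h1, hN4 t h2, dist_self]
        exact le_max_right _ _
      · have h1 : b0 ≤ t := le_of_lt (lt_of_le_of_lt (le_max_left _ _) ht)
        have h2 : N2 ≤ t := le_of_lt (lt_of_le_of_lt (le_max_right _ _) ht)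
        have e1 : (fp ∘ fm) t = fp t := by
          simp only [Function.comp_apply, hfm_eq_pos t h1]
        have e2 : (fp' ∘ fm') t = fp' t := by
          simp only [Function.comp_apply, hN2 t h2]
        calc dist (fp t) (fp' t) = dist ((fp ∘ fm) t) ((fp' ∘ fm') t) := by rw [e1, e2]
          _ ≤ M2 := hM2 t
          _ ≤ max M2 0 := le_max_left _ _
    · apply close_of_outside hfmPL.continuous cfm'
        (A := min (min 0 t0) u) (B := max b0 N2) (M := max M2 0)
      intro t ht
      rcases ht with ht | ht
      · have h1 : t ≤ 0 := le_of_lt (lt_of_lt_of_le ht (le_trans (min_le_left _ _) (min_le_left _ _)))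
        have h2 : t ≤ t0 := le_of_lt (lt_of_lt_of_le ht (le_trans (min_le_left _ _) (min_le_right _ _)))
        have h3 : t ≤ u := le_of_lt (lt_of_lt_of_le ht (min_le_right _ _))
        have h4 : fm t ≤ a0 := by
          rw [hfm_eq_neg t h1, ← ht0]; exact hfm.monotone h2
        have h5 : fm' t ≤ N4 := by rw [← hu]; exact hfm'mono.monotone h3
        have e1 : (fp ∘ fm) t = fm t := by
          simp only [Function.comp_apply, hfp_eq_neg _ h4]
        have e2 : (fp' ∘ fm') t = fm' t := by
          simp only [Function.comp_apply, hN4 _ h5]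
        calc dist (fm t) (fm' t) = dist ((fp ∘ fm) t) ((fp' ∘ fm') t) := by rw [e1, e2]
          _ ≤ M2 := hM2 t
          _ ≤ max M2 0 := le_max_left _ _
      · have h1 : b0 ≤ t := le_of_lt (lt_of_le_of_lt (le_max_left _ _) ht)
        have h2 : N2 ≤ t := le_of_lt (lt_of_le_of_lt (le_max_right _ _) ht)
        rw [hfm_eq_pos t h1, hN2 t h2, dist_self]
        exact le_max_right _ _
end

section
/- No orientation-reversing quasi-isometry class is central in QI(ℝ): if f is a quasi-isometry of ℝ that swaps the two ends (f(t) → −∞ as t → +∞ and f(t) → +∞ as t → −∞), then [f] is not in the center of QI(ℝ). -/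
/-- The PL homeomorphism with slope 1 on `(-∞,0)` and slope 2 on `[0,∞)`. -/
noncomputable def plH : ℝ → ℝ := fun x => if x < 0 then x else 2 * x

lemma plH_bounds (x y : ℝ) :
    dist x y ≤ dist (plH x) (plH y) ∧ dist (plH x) (plH y) ≤ 2 * dist x y := by
  simp only [plH, Real.dist_eq]
  split_ifs with hx hy hy
  · exact ⟨le_rfl, by nlinarith [abs_nonneg (x - y)]⟩
  · push_neg at hy
    rw [abs_of_neg (by linarith : x - y < 0), abs_of_neg (by linarith : x - 2 * y < 0)]
    constructor <;> linarith
  · push_neg at hx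
    rw [abs_of_pos (by linarith : (0:ℝ) < x - y), abs_of_pos (by linarith : (0:ℝ) < 2 * x - y)]
    constructor <;> linarith
  · rw [show 2 * x - 2 * y = 2 * (x - y) by ring, abs_mul, abs_two]
    exact ⟨by nlinarith [abs_nonneg (x - y)], le_rfl⟩

lemma plH_isQI : IsQI plH := by
  refine ⟨2, ⟨by norm_num, fun x y => ?_⟩, fun y => ⟨if y < 0 then y else y / 2, ?_⟩⟩
  · obtain ⟨hl, hu⟩ := plH_bounds x y
    constructor
    · have : dist x y / 2 ≤ dist x y := by
        have := dist_nonneg (x := x) (y := y); linarith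
      linarith
    · linarith
  · have : plH (if y < 0 then y else y / 2) = y := by
      simp only [plH]
      split_ifs with h h2 h2 <;> first | (exfalso; linarith) | ring | linarith
    rw [this]
    simpa using (by norm_num : (0:ℝ) < 2)

open Filter in
/-- No orientation-reversing quasi-isometry class is central in `QI(ℝ)`: if `f` swaps the
two ends of `ℝ` then `[f]` fails to commute with some class. -/
theorem orientation_reversing_not_central (f : ℝ → ℝ) (hf : IsQI f)
    (h₁ : Tendsto f atTop atBot) (h₂ : Tendsto f atBot atTop) :
    ¬ ∀ g : ℝ → ℝ, IsQI g → Close (f ∘ g) (g ∘ f) := by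
  intro H
  obtain ⟨K, ⟨hK1, hemb⟩, -⟩ := hf
  obtain ⟨M, hM⟩ := H plH plH_isQI
  have hK0 : (0:ℝ) < K := lt_trans one_pos hK1
  -- eventually f t < 0
  have hev : ∀ᶠ t in atTop, f t < 0 := h₁.eventually (eventually_lt_atBot 0)
  obtain ⟨N, hN⟩ := eventually_atTop.mp hev
  set t : ℝ := max N (max 1 (K * (M + K) + 1)) with ht
  have ht0 : 0 ≤ t := le_trans zero_le_one (le_max_of_le_right (le_max_left _ _))
  have htN : N ≤ t := le_max_left _ _
  have htK : K * (M + K) + 1 ≤ t := le_max_of_le_right (le_max_right _ _)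
  have hft : f t < 0 := hN t htN
  have hMt := hM t
  simp only [Function.comp_apply] at hMt
  have hplt : plH t = 2 * t := by simp [plH, not_lt.mpr ht0]
  have hplf : plH (f t) = f t := by simp [plH, hft]
  rw [hplt, hplf] at hMt
  have hlow := (hemb t (2 * t)).1
  have hd : dist t (2 * t) = t := by
    rw [Real.dist_eq]; rw [abs_of_nonpos (by linarith)]; ring
  rw [hd] at hlow
  have : dist (f t) (f (2 * t)) ≤ M := by
    rw [dist_comm]; exact hMt
  have htK' : t / K ≤ M + K := by linarith
  have : t ≤ K * (M + K) := by
    rw [div_le_iff₀ hK0] at htK'; linarith [htK']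
  linarith
end

section
/- Let f ∈ P₊ (a PL homeomorphism of ℝ with bounded slopes, fixing 0, equal to the identity near −∞) with [f] ≠ [id] in QI(ℝ). Then there exists a strictly increasing sequence bₙ → +∞ such that either (1) b_{n+1} > 3 f(bₙ) for all n and f(bₙ) − bₙ → +∞, or (2) b_{n+1} > 3 f⁻¹(bₙ) for all n and f⁻¹(bₙ) − bₙ → +∞. -/
open Filter Set in
/-- Auxiliary: a continuous function vanishing near `-∞` and unbounded above is unbounded
above on every right tail. -/
lemma my_tail_unbdd (g : ℝ → ℝ) (hg : Continuous g) (N : ℝ) (h0 : ∀ t ≤ N, g t = 0)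
    (hub : ∀ M : ℝ, ∃ t, M < g t) : ∀ C T : ℝ, ∃ t, T < t ∧ C < g t := by
  intro C T
  by_contra hcon
  push_neg at hcon
  set T' := max N T with hT'
  obtain ⟨B, hB⟩ := (isCompact_Icc (a := N) (b := T')).exists_bound_of_continuousOn
    hg.continuousOn
  obtain ⟨t, ht⟩ := hub (max (max C B) 0)
  rcases le_or_gt t N with h | h
  · rw [h0 t h] at ht
    simp at ht
  rcases le_or_gt t T' with h2 | h2
  · have := hB t ⟨h.le, h2⟩
    have : g t ≤ B := (le_abs_self _).trans (by simpa [Real.norm_eq_abs] using this)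
    have h3 : B < g t := lt_of_le_of_lt (le_max_right C B) (lt_of_le_of_lt (le_max_left _ 0) ht)
    linarith
  · have hT : T < t := lt_of_le_of_lt (le_max_right N T) h2
    have := hcon t hT
    have h3 : C < g t := lt_of_le_of_lt ((le_max_left C B).trans (le_max_left _ 0)) ht
    linarith

open Filter Set in
/-- Auxiliary: build the escape sequence from tail-unboundedness of `F - id`. -/
lemma my_build (F : ℝ → ℝ) (h : ∀ C T : ℝ, ∃ t, T < t ∧ C < F t - t) :
    ∃ b : ℕ → ℝ, StrictMono b ∧ Tendsto b atTop atTop ∧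
      (∀ n : ℕ, 3 * F (b n) < b (n + 1)) ∧
      Tendsto (fun n => F (b n) - b n) atTop atTop := by
  classical
  let b : ℕ → ℝ := fun n => Nat.rec ((h 0 0).choose)
    (fun n bn => (h (n + 1) (max bn (max (3 * F bn) (n + 1 : ℝ)))).choose) n
  have hb0 : (0:ℝ) < b 0 ∧ 0 < F (b 0) - b 0 := (h 0 0).choose_spec
  have hbs : ∀ n : ℕ, (max (b n) (max (3 * F (b n)) (n + 1 : ℝ)) < b (n + 1)) ∧
      ((n : ℝ) + 1 < F (b (n + 1)) - b (n + 1)) := fun n =>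
    (h (n + 1) (max (b n) (max (3 * F (b n)) (n + 1 : ℝ)))).choose_spec
  have hmono : StrictMono b := strictMono_nat_of_lt_succ fun n =>
    lt_of_le_of_lt (le_max_left _ _) (hbs n).1
  have hge : ∀ n : ℕ, (n : ℝ) < b n := by
    intro n
    cases n with
    | zero => simpa using hb0.1
    | succ n => exact lt_of_le_of_lt ((le_max_right _ _).trans' (by push_cast; linarith) |>.trans
        (le_max_right (b n) _)) (hbs n).1
  refine ⟨b, hmono, ?_,
    fun n => lt_of_le_of_lt ((le_max_left _ _).trans (le_max_right (b n) _)) (hbs n).1, ?_⟩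
  · exact tendsto_atTop_mono (fun n => (hge n).le) tendsto_natCast_atTop_atTop
  · apply tendsto_atTop_mono (f := fun n : ℕ => (n : ℝ))
    · intro n
      cases n with
      | zero => simpa using hb0.2.le
      | succ n =>
        have := (hbs n).2
        push_cast
        linarith
    · exact tendsto_natCast_atTop_atTop

open Filter Set in
/-- Auxiliary: a piecewise linear map is continuous. -/
lemma my_cont (f : ℝ → ℝ) (hf : IsPL f) : Continuous f := by
  rw [continuous_iff_continuousAt]
  intro x
  obtain ⟨ε, hε, a, b, c, d, h1, h2⟩ := hf x
  rw [continuousAt_iff_continuous_left_right]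
  constructor
  · have hc : ContinuousWithinAt (fun t => a * t + b) (Iic x) x :=
      ((continuous_const.mul continuous_id).add continuous_const).continuousWithinAt
    apply hc.congr_of_eventuallyEq
    · filter_upwards [Icc_mem_nhdsLE (by linarith : x - ε < x)] with t ht
      exact h1 t ht
    · exact h1 x ⟨by linarith, le_rfl⟩
  · have hc : ContinuousWithinAt (fun t => c * t + d) (Ici x) x :=
      ((continuous_const.mul continuous_id).add continuous_const).continuousWithinAt
    apply hc.congr_of_eventuallyEq
    · filter_upwards [Icc_mem_nhdsGE (by linarith : x < x + ε)] with t ht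
      exact h2 t ht
    · exact h2 x ⟨le_rfl, by linarith⟩

open Filter in
/-- For `f ∈ P₊` with `[f] ≠ [id]` there is a strictly increasing sequence `bₙ → ∞` with
either `b_{n+1} > 3 f(bₙ)` and `f(bₙ) − bₙ → ∞`, or the same for `f⁻¹`. -/
theorem escape_sequence (f finv : ℝ → ℝ) (hf : IsPLd f) (h0 : f 0 = 0)
    (hneg : IdNearNegInf f) (hnontriv : ¬ Close f (id : ℝ → ℝ))
    (hli : Function.LeftInverse finv f) (hri : Function.RightInverse finv f) :
    ∃ b : ℕ → ℝ, StrictMono b ∧ Tendsto b atTop atTop ∧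
      (((∀ n : ℕ, 3 * f (b n) < b (n + 1)) ∧
          Tendsto (fun n => f (b n) - b n) atTop atTop) ∨
       ((∀ n : ℕ, 3 * finv (b n) < b (n + 1)) ∧
          Tendsto (fun n => finv (b n) - b n) atTop atTop)) := by
  obtain ⟨hPL, hbij, -⟩ := hf
  have hcont := my_cont f hPL
  obtain ⟨N, hN⟩ := hneg
  have hmono : StrictMono f := by
    rcases hcont.strictMono_of_inj hbij.1 with h | h
    · exact h
    · exfalso
      have h1 : f (N - 1) = N - 1 := hN _ (by linarith)
      have h2 : f N = N := hN N le_rfl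
      have := h (show N - 1 < N by linarith)
      rw [h1, h2] at this; linarith
  have hub : ∀ M : ℝ, ∃ x, M < |f x - x| := by
    intro M
    by_contra hc; push_neg at hc
    exact hnontriv ⟨M, fun x => by simpa [Real.dist_eq] using hc x⟩
  by_cases hcase : ∀ M : ℝ, ∃ t, M < f t - t
  · have hkey := my_tail_unbdd (fun t => f t - t) (hcont.sub continuous_id) N
      (fun t ht => by simp [hN t ht]) hcase
    obtain ⟨b, h1, h2, h3, h4⟩ := my_build f hkey
    exact ⟨b, h1, h2, Or.inl ⟨h3, h4⟩⟩
  · push_neg at hcase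
    obtain ⟨M₀, hM₀⟩ := hcase
    have hub2 : ∀ M : ℝ, ∃ t, M < t - f t := by
      intro M
      obtain ⟨x, hx⟩ := hub (max M M₀)
      refine ⟨x, ?_⟩
      have h1 : f x - x ≤ M₀ := hM₀ x
      have hM₀le := le_max_right M M₀
      have hMle := le_max_left M M₀
      rcases abs_cases (f x - x) with ⟨he, _⟩ | ⟨he, _⟩
      · rw [he] at hx; linarith
      · rw [he] at hx; linarith
    have hkey0 := my_tail_unbdd (fun t => t - f t) (continuous_id.sub hcont) N
      (fun t ht => by simp [hN t ht]) hub2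
    have hkey : ∀ C T : ℝ, ∃ s, T < s ∧ C < finv s - s := by
      intro C T
      obtain ⟨t, ht1, ht2⟩ := hkey0 C (finv T)
      refine ⟨f t, ?_, ?_⟩
      · have := hmono ht1
        rwa [hri T] at this
      · rw [hli t]; exact ht2
    obtain ⟨b, h1, h2, h3, h4⟩ := my_build finv hkey
    exact ⟨b, h1, h2, Or.inr ⟨h3, h4⟩⟩
end

section
/- The center of the subgroup Q₊ of QI(ℝ) is trivial. -/
open Set

/-- Data for a sequence of disjoint PL "tent" bumps on the positive reals. -/
structure TentData : Type where
  l : ℕ → ℝ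
  e : ℕ → ℝ
  he : ∀ n : ℕ, (n : ℝ) + 1 ≤ e n
  hl : ∀ n : ℕ, (n : ℝ) < l n
  hsep : ∀ n, l n + 3 * e n < l (n + 1)

namespace TentData

variable (T : TentData)

noncomputable def p (n : ℕ) : ℝ := T.l n + T.e n
noncomputable def r (n : ℕ) : ℝ := T.l n + 3 * T.e n

lemma epos (n : ℕ) : 0 < T.e n :=
  lt_of_lt_of_le (by positivity) (T.he n)

lemma l_lt_p (n : ℕ) : T.l n < T.p n := by
  have := T.epos n; unfold p; linarith

lemma p_lt_r (n : ℕ) : T.p n < T.r n := by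
  have := T.epos n; unfold p r; linarith

lemma l_lt_r (n : ℕ) : T.l n < T.r n :=
  (T.l_lt_p n).trans (T.p_lt_r n)

lemma lmono : StrictMono T.l :=
  strictMono_nat_of_lt_succ fun n => by
    have h1 := T.hsep n; have := T.epos n; linarith

lemma r_lt_l {k m : ℕ} (h : k < m) : T.r k < T.l m :=
  lt_of_lt_of_le (T.hsep k) (T.lmono.monotone h)

def In (n : ℕ) (x : ℝ) : Prop := T.l n < x ∧ x < T.r n

lemma In_uniq {k n : ℕ} {x : ℝ} (h1 : T.In k x) (h2 : T.In n x) : k = n := by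
  rcases lt_trichotomy k n with h | h | h
  · exfalso; have := T.r_lt_l h; have := h1.2; have := h2.1; linarith
  · exact h
  · exfalso; have := T.r_lt_l h; have := h2.2; have := h1.1; linarith

open Classical in
noncomputable def B (x : ℝ) : ℝ :=
  if h : ∃ n, T.In n x then
    (if x ≤ T.p h.choose then x - T.l h.choose else (T.r h.choose - x) / 2)
  else 0

lemma B_of_in {n : ℕ} {x : ℝ} (h : T.In n x) :
    T.B x = if x ≤ T.p n then x - T.l n else (T.r n - x) / 2 := by
  have hex : ∃ k, T.In k x := ⟨n, h⟩
  rw [B, dif_pos hex]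
  have he : hex.choose = n := T.In_uniq hex.choose_spec h
  rw [he]

lemma B_zero {x : ℝ} (h : ∀ n, x ≤ T.l n ∨ T.r n ≤ x) : T.B x = 0 := by
  rw [B, dif_neg]
  rintro ⟨n, h1, h2⟩
  rcases h n with h' | h' <;> linarith

lemma B_nonneg (x : ℝ) : 0 ≤ T.B x := by
  rw [B]
  split_ifs with h h2
  · have := h.choose_spec.1; linarith
  · have := h.choose_spec.2; linarith
  · exact le_refl 0

lemma B_le_sub_l {n : ℕ} {x : ℝ} (h : T.In n x) : T.B x ≤ x - T.l n := by
  rw [T.B_of_in h]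
  split_ifs with hx
  · exact le_refl _
  · push_neg at hx
    have h2 := h.2
    unfold p at hx; unfold r at h2 ⊢
    linarith

lemma B_le_half {n : ℕ} {x : ℝ} (h : T.In n x) : T.B x ≤ (T.r n - x) / 2 := by
  rw [T.B_of_in h]
  split_ifs with hx
  · have h1 := h.1
    unfold p at hx; unfold r; linarith
  · exact le_refl _

lemma L1 {x y : ℝ} (hxy : x ≤ y) : T.B y - T.B x ≤ y - x := by
  by_cases hy : ∃ m, T.In m y
  · obtain ⟨m, hm⟩ := hy
    have hBy := T.B_le_sub_l hm
    by_cases hx : T.l m < x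
    · have hxin : T.In m x := ⟨hx, lt_of_le_of_lt hxy hm.2⟩
      rw [T.B_of_in hm, T.B_of_in hxin]
      have h1 := hm.1; have h2 := hm.2; have h3 := hxin.1; have h4 := hxin.2
      split_ifs with ha hb hb <;> unfold p r at * <;> linarith
    · push_neg at hx
      have := T.B_nonneg x
      linarith
  · rw [B, dif_neg hy]
    have := T.B_nonneg x
    linarith

lemma L2 {x y : ℝ} (hxy : x ≤ y) : T.B x - T.B y ≤ (y - x) / 2 := by
  by_cases hx : ∃ k, T.In k x
  · obtain ⟨k, hk⟩ := hx
    have hBx := T.B_le_half hk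
    by_cases hy : y < T.r k
    · have hyin : T.In k y := ⟨lt_of_lt_of_le hk.1 hxy, hy⟩
      rw [T.B_of_in hk, T.B_of_in hyin]
      have h1 := hk.1; have h2 := hk.2; have h3 := hyin.1; have h4 := hyin.2
      split_ifs with ha hb hb <;> unfold p r at * <;> linarith
    · push_neg at hy
      have := T.B_nonneg y
      linarith
  · rw [B, dif_neg hx]
    have := T.B_nonneg y
    linarith

/-- The bump homeomorphism. -/
noncomputable def g (x : ℝ) : ℝ := x + T.B x

lemma g_lip {x y : ℝ} (h : x ≤ y) : T.g y - T.g x ≤ 2 * (y - x) := by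
  have := T.L1 h; unfold g; linarith

lemma g_exp {x y : ℝ} (h : x ≤ y) : (y - x) / 2 ≤ T.g y - T.g x := by
  have := T.L2 h; unfold g; linarith

lemma g_strictMono : StrictMono T.g := fun x y h => by
  have := T.g_exp h.le; linarith

lemma g_cont : Continuous T.g := by
  have : LipschitzWith 2 T.g := by
    apply LipschitzWith.of_dist_le_mul
    intro x y
    rw [Real.dist_eq, Real.dist_eq]
    rcases le_total x y with h | h
    · have h1 := T.g_lip h
      have h2 := T.g_exp h
      rw [abs_of_nonpos (by linarith), abs_of_nonpos (by linarith)]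
      push_cast
      linarith
    · have h1 := T.g_lip h
      have h2 := T.g_exp h
      rw [abs_of_nonneg (by linarith), abs_of_nonneg (by linarith)]
      push_cast
      linarith
  exact this.continuous

lemma g_id_of_le {x : ℝ} (h : x ≤ T.l 0) : T.g x = x := by
  have : T.B x = 0 := T.B_zero fun n => Or.inl (h.trans (T.lmono.monotone (Nat.zero_le n)))
  rw [g, this, add_zero]

lemma g_surj : Function.Surjective T.g := by
  intro y
  rcases le_or_gt y (T.l 0) with h | h
  · exact ⟨y, T.g_id_of_le h⟩
  · have hga : T.g (T.l 0) = T.l 0 := T.g_id_of_le le_rfl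
    set b := T.l 0 + 2 * (y - T.l 0) with hb
    have hlb : T.l 0 ≤ b := by rw [hb]; linarith
    have hgb : y ≤ T.g b := by
      have := T.g_exp hlb
      rw [hga] at this
      rw [hb] at this ⊢
      linarith
    have := intermediate_value_Icc hlb T.g_cont.continuousOn
    obtain ⟨x, _, hx⟩ := this ⟨by rw [hga]; exact h.le, hgb⟩
    exact ⟨x, hx⟩

lemma g_bij : Function.Bijective T.g := ⟨T.g_strictMono.injective, T.g_surj⟩





lemma g_peak (n : ℕ) : T.g (T.p n) = T.p n + T.e n := by
  have hin : T.In n (T.p n) := ⟨T.l_lt_p n, T.p_lt_r n⟩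
  rw [g, T.B_of_in hin, if_pos (le_refl _)]
  unfold p
  ring

lemma A_gap (n : ℕ) : ∀ t, T.r n ≤ t → t ≤ T.l (n + 1) → T.g t = t := by
  intro t h1 h2
  have hB : T.B t = 0 := by
    apply T.B_zero
    intro k
    rcases le_or_gt k n with h | h
    · right
      calc T.r k ≤ T.r n := by
            rcases eq_or_lt_of_le h with rfl | h'
            · exact le_refl _
            · exact ((T.r_lt_l h').trans (T.l_lt_r n)).le
        _ ≤ t := h1
    · left
      exact h2.trans (T.lmono.monotone h)
  rw [g, hB, add_zero]

lemma A_rise (n : ℕ) : ∀ t, T.l n ≤ t → t ≤ T.p n → T.g t = 2 * t + (-T.l n) := by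
  intro t h1 h2
  rcases eq_or_lt_of_le h1 with rfl | h1'
  · have hB : T.B (T.l n) = 0 := by
      apply T.B_zero
      intro k
      rcases lt_or_ge k n with h | h
      · right; exact (T.r_lt_l h).le
      · left; exact T.lmono.monotone h
    rw [g, hB]; ring
  · have hin : T.In n t := ⟨h1', lt_of_le_of_lt h2 (T.p_lt_r n)⟩
    rw [g, T.B_of_in hin, if_pos h2]; ring

lemma A_fall (n : ℕ) : ∀ t, T.p n ≤ t → t ≤ T.r n → T.g t = (1/2) * t + T.r n / 2 := by
  intro t h1 h2
  rcases eq_or_lt_of_le h2 with rfl | h2'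
  · have hB : T.B (T.r n) = 0 := by
      apply T.B_zero
      intro k
      rcases le_or_gt k n with h | h
      · right
        rcases eq_or_lt_of_le h with rfl | h'
        · exact le_refl _
        · exact ((T.r_lt_l h').trans (T.l_lt_r n)).le
      · left; exact ((T.hsep n).le.trans (T.lmono.monotone h))
    rw [g, hB]; unfold r; ring
  · have hin : T.In n t := ⟨lt_of_lt_of_le (T.l_lt_p n) h1, h2'⟩
    rw [g, T.B_of_in hin]
    rcases eq_or_lt_of_le h1 with rfl | h1'
    · rw [if_pos (le_refl _)]; unfold p r; ring
    · rw [if_neg (not_le.mpr h1')]; ring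

lemma g_isPL : IsPL T.g := by
  intro x
  by_cases h0 : x < T.l 0
  · refine ⟨T.l 0 - x, by linarith, 1, 0, 1, 0, fun t ht => ?_, fun t ht => ?_⟩
    · rw [T.g_id_of_le (le_trans ht.2 h0.le)]; ring
    · rw [T.g_id_of_le (by linarith [ht.2])]; ring
  · push_neg at h0
    have hex : ∃ m, x < T.l m := by
      obtain ⟨k, hk⟩ := exists_nat_gt x
      exact ⟨k, hk.trans (T.hl k)⟩
    have hm := Nat.find_spec hex
    have hm0 : Nat.find hex ≠ 0 := by
      intro h
      rw [h] at hm
      linarith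
    obtain ⟨n, hn⟩ := Nat.exists_eq_succ_of_ne_zero hm0
    rw [hn] at hm
    have hln : T.l n ≤ x := by
      have := Nat.find_min hex (m := n) (by omega)
      push_neg at this
      exact this
    -- now T.l n ≤ x < T.l (n+1)
    have hlp := T.l_lt_p n
    have hpr := T.p_lt_r n
    have hrl := T.hsep n
    by_cases h1 : x < T.p n
    · by_cases h2 : T.l n < x
      · refine ⟨min (x - T.l n) (T.p n - x), lt_min (by linarith) (by linarith),
          2, -T.l n, 2, -T.l n, fun t ht => ?_, fun t ht => ?_⟩
        · have := min_le_left (x - T.l n) (T.p n - x)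
          exact T.A_rise n t (by linarith [ht.1]) (by linarith [ht.2])
        · have := min_le_right (x - T.l n) (T.p n - x)
          exact T.A_rise n t (by linarith [ht.1]) (by linarith [ht.2])
      · have hx : x = T.l n := le_antisymm (not_lt.1 h2) hln
        subst hx
        cases n with
        | zero =>
          refine ⟨min 1 (T.p 0 - T.l 0), lt_min one_pos (by linarith), 1, 0, 2, -T.l 0,
            fun t ht => ?_, fun t ht => ?_⟩
          · have := min_le_left 1 (T.p 0 - T.l 0)
            rw [T.g_id_of_le ht.2]; ring
          · have := min_le_right 1 (T.p 0 - T.l 0)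
            exact T.A_rise 0 t ht.1 (by linarith [ht.2])
        | succ k =>
          have hgap : T.r k < T.l (k+1) := T.hsep k
          refine ⟨min (T.l (k+1) - T.r k) (T.p (k+1) - T.l (k+1)),
            lt_min (by linarith) (by linarith), 1, 0, 2, -T.l (k+1),
            fun t ht => ?_, fun t ht => ?_⟩
          · have := min_le_left (T.l (k+1) - T.r k) (T.p (k+1) - T.l (k+1))
            rw [T.A_gap k t (by linarith [ht.1]) ht.2]; ring
          · have := min_le_right (T.l (k+1) - T.r k) (T.p (k+1) - T.l (k+1))
            exact T.A_rise (k+1) t ht.1 (by linarith [ht.2])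
    · push_neg at h1
      by_cases h2 : x < T.r n
      · by_cases h3 : T.p n < x
        · refine ⟨min (x - T.p n) (T.r n - x), lt_min (by linarith) (by linarith),
            1/2, T.r n / 2, 1/2, T.r n / 2, fun t ht => ?_, fun t ht => ?_⟩
          · have := min_le_left (x - T.p n) (T.r n - x)
            exact T.A_fall n t (by linarith [ht.1]) (by linarith [ht.2])
          · have := min_le_right (x - T.p n) (T.r n - x)
            exact T.A_fall n t (by linarith [ht.1]) (by linarith [ht.2])
        · have hx : x = T.p n := le_antisymm (not_lt.1 h3) h1
          subst hx
          refine ⟨min (T.p n - T.l n) (T.r n - T.p n), lt_min (by linarith) (by linarith),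
            2, -T.l n, 1/2, T.r n / 2, fun t ht => ?_, fun t ht => ?_⟩
          · have := min_le_left (T.p n - T.l n) (T.r n - T.p n)
            exact T.A_rise n t (by linarith [ht.1]) ht.2
          · have := min_le_right (T.p n - T.l n) (T.r n - T.p n)
            exact T.A_fall n t ht.1 (by linarith [ht.2])
      · push_neg at h2
        by_cases h3 : T.r n < x
        · refine ⟨min (x - T.r n) (T.l (n+1) - x), lt_min (by linarith) (by linarith [hm]),
            1, 0, 1, 0, fun t ht => ?_, fun t ht => ?_⟩
          · have := min_le_left (x - T.r n) (T.l (n+1) - x)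
            rw [T.A_gap n t (by linarith [ht.1]) (by linarith [ht.2, hm])]; ring
          · have := min_le_right (x - T.r n) (T.l (n+1) - x)
            rw [T.A_gap n t (by linarith [ht.1]) (by linarith [ht.2])]; ring
        · have hx : x = T.r n := le_antisymm (not_lt.1 h3) h2
          subst hx
          refine ⟨min (T.r n - T.p n) (T.l (n+1) - T.r n), lt_min (by linarith) (by linarith),
            1/2, T.r n / 2, 1, 0, fun t ht => ?_, fun t ht => ?_⟩
          · have := min_le_left (T.r n - T.p n) (T.l (n+1) - T.r n)
            exact T.A_fall n t (by linarith [ht.1]) ht.2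
          · have := min_le_right (T.r n - T.p n) (T.l (n+1) - T.r n)
            rw [T.A_gap n t ht.1 (by linarith [ht.2])]; ring

lemma g_slopes : ∀ a ∈ slopes T.g, (4:ℝ)⁻¹ < |a| ∧ |a| < 4 := by
  rintro a ⟨b, x, y, hxy, hab⟩
  have hx : T.g x = a * x + b := hab x ⟨le_refl _, hxy.le⟩
  have hy : T.g y = a * y + b := hab y ⟨hxy.le, le_refl _⟩
  have h1 := T.g_lip hxy.le
  have h2 := T.g_exp hxy.le
  rw [hx, hy] at h1 h2
  have hy0 : 0 < y - x := by linarith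
  have ha1 : 1/2 ≤ a := by nlinarith
  have ha2 : a ≤ 2 := by nlinarith
  rw [abs_of_pos (by linarith)]
  constructor <;> [norm_num; skip] <;> linarith

lemma g_isPLd : IsPLd T.g :=
  ⟨T.g_isPL, T.g_bij, 4, by norm_num, T.g_slopes⟩

end TentData


/-- Generic dependent-choice style recursion producing a sequence with a state. -/
lemma exists_rec_seq {α β : Type*} (P : α → ℕ → β → Prop) (F : β → α) (a0 : α)
    (h : ∀ a n, ∃ b, P a n b) :
    ∃ (A : ℕ → α) (B : ℕ → β), A 0 = a0 ∧ (∀ n, P (A n) n (B n)) ∧ ∀ n, A (n + 1) = F (B n) := by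
  choose c hc using h
  exact ⟨fun n => Nat.rec a0 (fun k ih => F (c ih k)) n,
    fun n => c (Nat.rec a0 (fun k ih => F (c ih k)) n) n,
    rfl, fun n => hc _ _, fun n => rfl⟩

/-- The center of the subgroup `Q₊ ⊆ QI(ℝ)` (classes of PL homeomorphisms with bounded
slopes, fixing `0`, equal to the identity near `-∞`) is trivial. -/
theorem center_Qplus_trivial (f : ℝ → ℝ) (hf : IsPLd f) (h0 : f 0 = 0)
    (hneg : IdNearNegInf f)
    (hcentral : ∀ g : ℝ → ℝ, IsPLd g → g 0 = 0 → IdNearNegInf g →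
      Close (f ∘ g) (g ∘ f)) :
    Close f (id : ℝ → ℝ) := by
  by_contra hnc
  obtain ⟨hPL, hbij, -⟩ := hf
  obtain ⟨N, hN⟩ := hneg
  -- unbounded displacement
  have hnc' : ∀ M : ℝ, ∃ x : ℝ, M < |f x - x| := by
    intro M
    by_contra h
    push_neg at h
    refine hnc ⟨M, fun x => ?_⟩
    rw [Real.dist_eq]
    exact h x
  -- continuity of f
  have hcont : Continuous f := by
    rw [continuous_iff_continuousAt]
    intro x
    obtain ⟨ε, hε, a, b, c, d, hab, hcd⟩ := hPL x
    have hca : Continuous fun t : ℝ => a * t + b :=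
      (continuous_const.mul continuous_id).add continuous_const
    have hcc : Continuous fun t : ℝ => c * t + d :=
      (continuous_const.mul continuous_id).add continuous_const
    rw [continuousAt_iff_continuous_left_right]
    constructor
    · exact (hca.continuousWithinAt.congr hab
        (hab x ⟨by linarith, le_refl x⟩)).mono_of_mem_nhdsWithin
        (Icc_mem_nhdsLE (by linarith))
    · exact (hcc.continuousWithinAt.congr hcd
        (hcd x ⟨le_refl x, by linarith⟩)).mono_of_mem_nhdsWithin
        (Icc_mem_nhdsGE (by linarith))
  -- strict monotonicity of f
  have hmono : StrictMono f := by
    apply hcont.strictMonoOn_of_inj_rigidity hbij.1 (a := N - 1) (b := N) (by linarith)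
    intro u hu v hv huv
    rw [hN u (hu.2), hN v hv.2]
    exact huv
  -- displacement bounded on rays to -infty
  have hbdd : ∀ A : ℝ, ∃ K : ℝ, ∀ t ≤ A, |f t - t| ≤ K := by
    intro A
    obtain ⟨K, hK⟩ := (isCompact_Icc (a := min N A) (b := A)).exists_bound_of_continuousOn
      (f := fun t => f t - t) ((hcont.sub continuous_id).continuousOn)
    refine ⟨max K 0, fun s hs => ?_⟩
    rcases le_or_gt s N with h | h
    · rw [hN s h]; simp
    · have h1 : s ∈ Set.Icc (min N A) A := ⟨le_trans (min_le_left N A) h.le, hs⟩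
      have := hK s h1
      rw [Real.norm_eq_abs] at this
      exact this.trans (le_max_left K 0)
  have hray : ∀ C : ℝ, ∃ u : ℝ, ∀ t, u ≤ t → C ≤ f t := by
    intro C
    obtain ⟨u, hu⟩ := hbij.2 C
    exact ⟨u, fun t ht => hu ▸ hmono.monotone ht⟩
  -- the half-min displacement function
  set E : ℝ → ℝ := fun t => min |f t - t| (f t) / 2 with hE
  have step : ∀ (R : ℝ) (n : ℕ), ∃ t : ℝ,
      R < t ∧ (n : ℝ) + 1 ≤ E t ∧ R < f t - E t ∧
        (t ≤ f t - E t ∨ f t + 2 * E t ≤ t) := by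
    intro R n
    set C : ℝ := 2 * ((n : ℝ) + 1) + 4 * |R| + 4 with hC
    have hCpos : 0 < C := by
      have := abs_nonneg R
      have : (0:ℝ) ≤ (n : ℝ) := Nat.cast_nonneg n
      rw [hC]; positivity
    obtain ⟨u, hu⟩ := hray C
    obtain ⟨K, hK⟩ := hbdd (max u R)
    obtain ⟨t, ht⟩ := hnc' (max K C)
    have h1 : ¬ t ≤ max u R := by
      intro h
      have := hK t h
      have := le_max_left K C
      linarith
    push_neg at h1
    have htu : C ≤ f t := hu t (le_trans (le_max_left u R) h1.le)
    have htR : R < t := lt_of_le_of_lt (le_max_right u R) h1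
    have hCd : C < |f t - t| := lt_of_le_of_lt (le_max_right K C) ht
    have hmin : C ≤ min |f t - t| (f t) := le_min hCd.le htu
    have hE1 : C / 2 ≤ E t := by rw [hE]; dsimp only; linarith
    have hE2 : E t ≤ (f t) / 2 := by
      rw [hE]; dsimp only
      have := min_le_right |f t - t| (f t)
      linarith
    have hE3 : 2 * E t ≤ |f t - t| := by
      rw [hE]; dsimp only
      have := min_le_left |f t - t| (f t)
      linarith
    have habs := abs_nonneg R
    have hle := le_abs_self R
    have hn0 : (0:ℝ) ≤ (n : ℝ) := Nat.cast_nonneg n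
    refine ⟨t, htR, by rw [hC] at hE1; linarith, ?_, ?_⟩
    · -- R < f t - E t
      rw [hC] at hE1
      linarith
    · rcases le_or_gt t (f t) with h | h
      · left
        rw [abs_of_nonneg (by linarith)] at hE3
        linarith
      · right
        rw [abs_of_neg (by linarith)] at hE3
        linarith
  obtain ⟨R, t, hR0, hP, hRs⟩ := exists_rec_seq
    (fun R n t => R < t ∧ (n : ℝ) + 1 ≤ E t ∧ R < f t - E t ∧
      (t ≤ f t - E t ∨ f t + 2 * E t ≤ t))
    (fun t => max t (f t + 2 * E t) + 1) 0 step
  have hRmono : ∀ n, R n < R (n + 1) := by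
    intro n
    rw [hRs n]
    have h1 := (hP n).1
    have := le_max_left (t n) (f (t n) + 2 * E (t n))
    linarith
  have hRmono' : Monotone R := monotone_nat_of_le_succ fun n => (hRmono n).le
  have hRn : ∀ n : ℕ, (n : ℝ) ≤ R n := by
    intro n
    induction n with
    | zero => rw [hR0]; norm_num
    | succ k ih =>
      rw [hRs k]
      have h1 := (hP k).1
      have := le_max_left (t k) (f (t k) + 2 * E (t k))
      push_cast
      linarith
  -- build the tent data
  set T : TentData :=
    ⟨fun n => f (t n) - E (t n), fun n => E (t n),
      fun n => (hP n).2.1,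
      fun n => lt_of_le_of_lt (hRn n) (hP n).2.2.1,
      fun n => by
        have h2 : f (t n) + 2 * E (t n) < R (n + 1) := by
          rw [hRs n]
          have := le_max_right (t n) (f (t n) + 2 * E (t n))
          linarith
        have h3 := (hP (n + 1)).2.2.1
        linarith⟩ with hT
  have hTl : ∀ n, T.l n = f (t n) - E (t n) := fun n => rfl
  have hTe : ∀ n, T.e n = E (t n) := fun n => rfl
  have hTp : ∀ n, T.p n = f (t n) := by
    intro n
    rw [TentData.p, hTl, hTe]; ring
  have hTr : ∀ n, T.r n = f (t n) + 2 * E (t n) := by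
    intro n
    rw [TentData.r, hTl, hTe]; ring
  -- g fixes t n
  have hgt : ∀ n, T.g (t n) = t n := by
    intro n
    have hB : T.B (t n) = 0 := by
      apply T.B_zero
      intro k
      rcases lt_trichotomy k n with h | rfl | h
      · right
        rw [hTr]
        have h2 : f (t k) + 2 * E (t k) < R (k + 1) := by
          rw [hRs k]
          have := le_max_right (t k) (f (t k) + 2 * E (t k))
          linarith
        have h3 : R (k + 1) ≤ R n := hRmono' h
        have h4 := (hP n).1
        linarith
      · rw [hTl, hTr]
        rcases (hP k).2.2.2 with h | h
        · left; exact h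
        · right; exact h
      · left
        rw [hTl]
        have h2 : t n < R (n + 1) := by
          rw [hRs n]
          have := le_max_left (t n) (f (t n) + 2 * E (t n))
          linarith
        have h3 : R (n + 1) ≤ R k := hRmono' h
        have h4 := (hP k).2.2.1
        linarith
    rw [TentData.g, hB, add_zero]
  -- contradiction via hcentral
  have hl0pos : 0 < T.l 0 := by
    have h := (hP 0).2.2.1
    rw [hR0] at h
    rw [hTl 0]
    exact h
  have hg0 : T.g 0 = 0 := T.g_id_of_le hl0pos.le
  have hgneg : IdNearNegInf T.g := ⟨0, fun s hs => T.g_id_of_le (le_trans hs hl0pos.le)⟩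
  obtain ⟨M, hM⟩ := hcentral T.g T.g_isPLd hg0 hgneg
  obtain ⟨n, hn⟩ := exists_nat_gt M
  have hMn := hM (t n)
  have hfg : (f ∘ T.g) (t n) = T.p n := by
    rw [Function.comp_apply, hgt n, hTp]
  have hgf : (T.g ∘ f) (t n) = T.p n + T.e n := by
    rw [Function.comp_apply, ← hTp n, T.g_peak n]
  rw [hfg, hgf, Real.dist_eq] at hMn
  have he := (hP n).2.1
  rw [← hTe] at he
  rw [abs_of_nonpos (by linarith), neg_sub] at hMn
  have : T.p n + T.e n - T.p n = T.e n := by ring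
  rw [this] at hMn
  have : (n : ℝ) ≥ 0 := Nat.cast_nonneg n
  linarith
end

section
/- The center of the group QI(ℝ) of quasi-isometry classes of the real line is trivial. -/
open Real Filter Set



section Aux


noncomputable def Gfun (ω x : ℝ) : ℝ := x + |x| / 8 * Real.sin (ω * Real.log x)

lemma Gfun_deriv_pos {ω x : ℝ} (hx : 0 < x) :
    HasDerivAt (Gfun ω) (1 + (Real.sin (ω * Real.log x) + ω * Real.cos (ω * Real.log x)) / 8) x := by
  have h1 : HasDerivAt (fun y : ℝ => ω * Real.log y) (ω * x⁻¹) x :=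
    (Real.hasDerivAt_log hx.ne').const_mul ω
  have h2 : HasDerivAt (fun y : ℝ => Real.sin (ω * Real.log y))
      (Real.cos (ω * Real.log x) * (ω * x⁻¹)) x :=
    (Real.hasDerivAt_sin _).comp x h1
  have h3 : HasDerivAt (fun y : ℝ => y / 8) (1 / 8) x := by
    simpa using (hasDerivAt_id x).div_const 8
  have h4 : HasDerivAt (fun y : ℝ => y / 8 * Real.sin (ω * Real.log y))
      (1 / 8 * Real.sin (ω * Real.log x) + x / 8 * (Real.cos (ω * Real.log x) * (ω * x⁻¹))) x :=
    h3.mul h2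
  have h5 : HasDerivAt (fun y : ℝ => y + y / 8 * Real.sin (ω * Real.log y))
      (1 + (1 / 8 * Real.sin (ω * Real.log x) + x / 8 * (Real.cos (ω * Real.log x) * (ω * x⁻¹)))) x :=
    (hasDerivAt_id x).add h4
  have heq : (fun y : ℝ => Gfun ω y) =ᶠ[nhds x] fun y => y + y / 8 * Real.sin (ω * Real.log y) := by
    filter_upwards [eventually_gt_nhds hx] with y hy
    simp [Gfun, abs_of_pos hy]
  have := h5.congr_of_eventuallyEq heq
  refine this.congr_deriv ?_
  have hxx : x * x⁻¹ = 1 := mul_inv_cancel₀ hx.ne'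
  linear_combination (ω * Real.cos (ω * Real.log x) / 8) * hxx

lemma Gfun_deriv_neg {ω x : ℝ} (hx : x < 0) :
    HasDerivAt (Gfun ω) (1 - (Real.sin (ω * Real.log x) + ω * Real.cos (ω * Real.log x)) / 8) x := by
  have h1 : HasDerivAt (fun y : ℝ => ω * Real.log y) (ω * x⁻¹) x :=
    (Real.hasDerivAt_log hx.ne).const_mul ω
  have h2 : HasDerivAt (fun y : ℝ => Real.sin (ω * Real.log y))
      (Real.cos (ω * Real.log x) * (ω * x⁻¹)) x :=
    (Real.hasDerivAt_sin _).comp x h1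
  have h3 : HasDerivAt (fun y : ℝ => -y / 8) (-1 / 8) x := by
    simpa using ((hasDerivAt_id x).neg).div_const 8
  have h4 : HasDerivAt (fun y : ℝ => -y / 8 * Real.sin (ω * Real.log y))
      (-1 / 8 * Real.sin (ω * Real.log x) + -x / 8 * (Real.cos (ω * Real.log x) * (ω * x⁻¹))) x :=
    h3.mul h2
  have h5 : HasDerivAt (fun y : ℝ => y + -y / 8 * Real.sin (ω * Real.log y))
      (1 + (-1 / 8 * Real.sin (ω * Real.log x) + -x / 8 * (Real.cos (ω * Real.log x) * (ω * x⁻¹)))) x :=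
    (hasDerivAt_id x).add h4
  have heq : (fun y : ℝ => Gfun ω y) =ᶠ[nhds x] fun y => y + -y / 8 * Real.sin (ω * Real.log y) := by
    filter_upwards [eventually_lt_nhds hx] with y hy
    simp [Gfun, abs_of_neg hy, neg_div]
  have := h5.congr_of_eventuallyEq heq
  refine this.congr_deriv ?_
  have hxx : x * x⁻¹ = 1 := mul_inv_cancel₀ hx.ne
  linear_combination (-(ω * Real.cos (ω * Real.log x) / 8)) * hxx

lemma Gfun_cont (ω : ℝ) : Continuous (Gfun ω) := by
  rw [continuous_iff_continuousAt]
  intro x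
  rcases lt_trichotomy x 0 with hx | hx | hx
  · exact (Gfun_deriv_neg hx).continuousAt
  · subst hx
    have h0 : Gfun ω 0 = 0 := by simp [Gfun]
    rw [ContinuousAt, h0]
    apply squeeze_zero_norm (a := fun y : ℝ => 9/8 * |y|)
    · intro y
      have hs : |Real.sin (ω * Real.log y)| ≤ 1 := Real.abs_sin_le_one _
      have hterm : |(|y| / 8) * Real.sin (ω * Real.log y)| ≤ |y| / 8 := by
        rw [abs_mul, abs_of_nonneg (by positivity : (0:ℝ) ≤ |y|/8)]
        nlinarith [abs_nonneg y, Real.abs_sin_le_one (ω * Real.log y), abs_nonneg (Real.sin (ω * Real.log y))]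
      calc ‖Gfun ω y‖ = |Gfun ω y| := rfl
        _ ≤ |y| + |(|y| / 8) * Real.sin (ω * Real.log y)| := abs_add_le _ _
        _ ≤ |y| + |y| / 8 := by linarith
        _ = 9/8 * |y| := by ring
    · have : Tendsto (fun y : ℝ => 9/8 * |y|) (nhds 0) (nhds (9/8 * |(0:ℝ)|)) := by
        exact (continuous_const.mul continuous_abs).tendsto 0
      simpa using this
  · exact (Gfun_deriv_pos hx).continuousAt

lemma sin_add_mul_cos_abs_le (ω t : ℝ) (hω : 0 ≤ ω) :
    |Real.sin t + ω * Real.cos t| ≤ 1 + ω := by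
  calc |Real.sin t + ω * Real.cos t| ≤ |Real.sin t| + |ω * Real.cos t| := abs_add_le _ _
    _ ≤ 1 + ω * 1 := by
        gcongr
        · exact Real.abs_sin_le_one _
        · rw [abs_mul, abs_of_nonneg hω]
          gcongr
          · exact Real.abs_cos_le_one _
    _ = 1 + ω := by ring

/-- `Gfun ω x - x/2` is monotone (for `0 ≤ ω < 3`). -/
lemma Gfun_low_mono {ω : ℝ} (hω : 0 ≤ ω) (hω3 : ω < 3) :
    Monotone (fun x => Gfun ω x - x / 2) := by
  have hderiv : ∀ x : ℝ, x ≠ 0 → HasDerivAt (fun x => Gfun ω x - x / 2)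
      ((if 0 < x then (1:ℝ) else -1) * ((Real.sin (ω * Real.log x) + ω * Real.cos (ω * Real.log x)) / 8) + 1/2) x := by
    intro x hx
    rcases hx.lt_or_gt with h | h
    · have := (Gfun_deriv_neg (ω := ω) h).sub ((hasDerivAt_id x).div_const 2)
      have hne : ¬ (0 < x) := by linarith
      refine this.congr_deriv ?_
      simp [hne]
      ring
    · have := (Gfun_deriv_pos (ω := ω) h).sub ((hasDerivAt_id x).div_const 2)
      simp only [if_pos h]
      refine this.congr_deriv ?_
      ring
  have hpos : ∀ x : ℝ, x ≠ 0 → ∀ d, HasDerivAt (fun x => Gfun ω x - x / 2) d x → 0 < d := by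
    intro x hx d hd
    rcases hderiv x hx with h'
    have hdd := h'.unique hd
    rw [← hdd]
    have hb := sin_add_mul_cos_abs_le ω (ω * Real.log x) hω
    have h8 : |(Real.sin (ω * Real.log x) + ω * Real.cos (ω * Real.log x)) / 8| ≤ (1 + ω)/8 := by
      rw [abs_div]
      simp only [abs_of_nonneg (by norm_num : (0:ℝ) ≤ 8)]
      gcongr
    have hlt : (1 + ω)/8 < 1/2 := by linarith
    have := abs_le.1 h8
    rcases lt_or_ge 0 x with h | h
    · simp only [if_pos h]; linarith [this.1]
    · have : ¬ (0 < x) := not_lt.2 h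
      simp only [if_neg this]; linarith [(abs_le.1 h8).2]
  -- monotone on Ici 0 and Iic 0, then glue
  have hcont : Continuous (fun x => Gfun ω x - x / 2) :=
    (Gfun_cont ω).sub (continuous_id.div_const 2)
  have m1 : StrictMonoOn (fun x => Gfun ω x - x / 2) (Set.Ici 0) := by
    apply strictMonoOn_of_deriv_pos (convex_Ici 0) hcont.continuousOn
    intro x hx
    rw [interior_Ici] at hx
    have hd := hderiv x (ne_of_gt hx)
    rw [hd.deriv]
    exact hpos x (ne_of_gt hx) _ hd
  have m2 : StrictMonoOn (fun x => Gfun ω x - x / 2) (Set.Iic 0) := by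
    apply strictMonoOn_of_deriv_pos (convex_Iic 0) hcont.continuousOn
    intro x hx
    rw [interior_Iic] at hx
    have hd := hderiv x (ne_of_lt hx)
    rw [hd.deriv]
    exact hpos x (ne_of_lt hx) _ hd
  intro x y hxy
  rcases le_total 0 x with h | h
  · exact (m1.monotoneOn) h (le_trans h hxy) hxy
  · rcases le_total y 0 with h' | h'
    · exact (m2.monotoneOn) h h' hxy
    · exact le_trans ((m2.monotoneOn) h Set.self_mem_Iic h) ((m1.monotoneOn) Set.self_mem_Ici h' h')

/-- `3/2 * x - Gfun ω x` is monotone (for `0 ≤ ω < 3`). -/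
lemma Gfun_high_mono {ω : ℝ} (hω : 0 ≤ ω) (hω3 : ω < 3) :
    Monotone (fun x => 3/2 * x - Gfun ω x) := by
  have hderiv : ∀ x : ℝ, x ≠ 0 → HasDerivAt (fun x => 3/2 * x - Gfun ω x)
      (1/2 - (if 0 < x then (1:ℝ) else -1) * ((Real.sin (ω * Real.log x) + ω * Real.cos (ω * Real.log x)) / 8)) x := by
    intro x hx
    rcases hx.lt_or_gt with h | h
    · have := ((hasDerivAt_id x).const_mul (3/2 : ℝ)).sub (Gfun_deriv_neg (ω := ω) h)
      have hne : ¬ (0 < x) := by linarith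
      refine this.congr_deriv ?_
      simp [hne]
      ring
    · have := ((hasDerivAt_id x).const_mul (3/2 : ℝ)).sub (Gfun_deriv_pos (ω := ω) h)
      simp only [if_pos h]
      refine this.congr_deriv ?_
      ring
  have hpos : ∀ x : ℝ, x ≠ 0 → 0 < 1/2 - (if 0 < x then (1:ℝ) else -1) * ((Real.sin (ω * Real.log x) + ω * Real.cos (ω * Real.log x)) / 8) := by
    intro x hx
    have hb := sin_add_mul_cos_abs_le ω (ω * Real.log x) hω
    have h8 : |(Real.sin (ω * Real.log x) + ω * Real.cos (ω * Real.log x)) / 8| ≤ (1 + ω)/8 := by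
      rw [abs_div]
      simp only [abs_of_nonneg (by norm_num : (0:ℝ) ≤ 8)]
      gcongr
    have := abs_le.1 h8
    rcases lt_or_ge 0 x with h | h
    · simp only [if_pos h]; linarith [this.2]
    · simp only [if_neg (not_lt.2 h)]; linarith [this.1]
  have hcont : Continuous (fun x => 3/2 * x - Gfun ω x) :=
    (continuous_const.mul continuous_id).sub (Gfun_cont ω)
  have m1 : StrictMonoOn (fun x => 3/2 * x - Gfun ω x) (Set.Ici 0) := by
    apply strictMonoOn_of_deriv_pos (convex_Ici 0) hcont.continuousOn
    intro x hx
    rw [interior_Ici] at hx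
    rw [(hderiv x (ne_of_gt hx)).deriv]
    exact hpos x (ne_of_gt hx)
  have m2 : StrictMonoOn (fun x => 3/2 * x - Gfun ω x) (Set.Iic 0) := by
    apply strictMonoOn_of_deriv_pos (convex_Iic 0) hcont.continuousOn
    intro x hx
    rw [interior_Iic] at hx
    rw [(hderiv x (ne_of_lt hx)).deriv]
    exact hpos x (ne_of_lt hx)
  intro x y hxy
  rcases le_total 0 x with h | h
  · exact (m1.monotoneOn) h (le_trans h hxy) hxy
  · rcases le_total y 0 with h' | h'
    · exact (m2.monotoneOn) h h' hxy
    · exact le_trans ((m2.monotoneOn) h Set.self_mem_Iic h) ((m1.monotoneOn) Set.self_mem_Ici h' h')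

/-- Bilipschitz bounds for `Gfun`. -/
lemma Gfun_bilip {ω : ℝ} (hω : 0 ≤ ω) (hω3 : ω < 3) (u v : ℝ) :
    |u - v| / 2 ≤ |Gfun ω u - Gfun ω v| ∧ |Gfun ω u - Gfun ω v| ≤ 3/2 * |u - v| := by
  wlog huv : v ≤ u generalizing u v
  · have := this v u (le_of_not_ge huv)
    rw [abs_sub_comm u v, abs_sub_comm (Gfun ω u) _]
    exact this
  have h1 := Gfun_low_mono hω hω3 huv
  have h2 := Gfun_high_mono hω hω3 huv
  simp only at h1 h2
  have hlow : (u - v) / 2 ≤ Gfun ω u - Gfun ω v := by linarith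
  have hhigh : Gfun ω u - Gfun ω v ≤ 3/2 * (u - v) := by linarith
  have habs : |u - v| = u - v := abs_of_nonneg (by linarith)
  constructor
  · rw [habs, abs_of_nonneg (by linarith : (0:ℝ) ≤ Gfun ω u - Gfun ω v)]
    linarith
  · rw [habs, abs_of_nonneg (by linarith : (0:ℝ) ≤ Gfun ω u - Gfun ω v)]
    linarith

lemma Gfun_surj {ω : ℝ} (hω : 0 ≤ ω) (hω3 : ω < 3) : Function.Surjective (Gfun ω) := by
  have h0 : Gfun ω 0 = 0 := by simp [Gfun]
  have hhalf : Tendsto (fun x : ℝ => x / 2) atTop atTop :=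
    tendsto_id.atTop_div_const (by norm_num)
  have hhalf' : Tendsto (fun x : ℝ => x / 2) atBot atBot :=
    tendsto_id.atBot_div_const (by norm_num)
  apply Continuous.surjective (Gfun_cont ω)
  · apply tendsto_atTop_mono' _ _ hhalf
    filter_upwards [eventually_ge_atTop (0:ℝ)] with x hx
    have := Gfun_low_mono hω hω3 hx
    simp only [h0] at this
    simpa using this
  · apply tendsto_atBot_mono' _ _ hhalf'
    filter_upwards [eventually_le_atBot (0:ℝ)] with x hx
    have := Gfun_low_mono hω hω3 hx
    simp only [h0] at this
    simpa using this
lemma isQI_Gfun {ω : ℝ} (hω : 0 ≤ ω) (hω3 : ω < 3) : IsQI (Gfun ω) := by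
  refine ⟨2, ⟨by norm_num, ?_⟩, ?_⟩
  · intro x y
    obtain ⟨h1, h2⟩ := Gfun_bilip hω hω3 x y
    rw [Real.dist_eq, Real.dist_eq]
    constructor
    · nlinarith [abs_nonneg (x - y)]
    · nlinarith [abs_nonneg (x - y)]
  · intro y
    obtain ⟨x, hx⟩ := Gfun_surj hω hω3 y
    exact ⟨x, by rw [hx]; simpa using (by norm_num : (0:ℝ) < 2)⟩

lemma isQI_mul {t : ℝ} (ht : t ≠ 0) : IsQI (fun x : ℝ => t * x) := by
  have h0 : 0 < |t| := abs_pos.2 ht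
  refine ⟨|t| + |t|⁻¹ + 1, ⟨?_, ?_⟩, ?_⟩
  · nlinarith [inv_pos.2 h0]
  · intro x y
    have hd : dist (t * x) (t * y) = |t| * dist x y := by
      rw [Real.dist_eq, Real.dist_eq, ← abs_mul]
      ring_nf
    rw [hd]
    have hdn : (0:ℝ) ≤ dist x y := dist_nonneg
    have hK : 0 < |t| + |t|⁻¹ + 1 := by positivity
    constructor
    · have key : dist x y / (|t| + |t|⁻¹ + 1) ≤ |t| * dist x y := by
        rw [div_le_iff₀ hK]
        have hcan : |t| * |t|⁻¹ = 1 := mul_inv_cancel₀ (ne_of_gt h0)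
        have expand : |t| * dist x y * (|t| + |t|⁻¹ + 1)
            = |t|^2 * dist x y + dist x y + |t| * dist x y := by
          have : |t| * dist x y * (|t| + |t|⁻¹ + 1)
              = |t|^2 * dist x y + (|t| * |t|⁻¹) * dist x y + |t| * dist x y := by ring
          rw [this, hcan]; ring
        rw [expand]
        nlinarith [mul_nonneg (mul_nonneg h0.le h0.le) hdn, mul_nonneg h0.le hdn]
      linarith
    · nlinarith [mul_nonneg (le_of_lt (inv_pos.2 h0)) hdn]
  · intro y
    refine ⟨t⁻¹ * y, ?_⟩
    show dist (t * (t⁻¹ * y)) y < _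
    rw [show t * (t⁻¹ * y) = y by field_simp]
    simp only [dist_self]
    positivity

lemma Gfun_key {ω c C : ℝ} (hω : 0 < ω) (hc : c ≠ 0)
    (H : ∀ x : ℝ, |c * Gfun ω x - Gfun ω (c * x)| ≤ C) (θ : ℝ) :
    c * Real.sin θ = |c| * Real.sin (θ + ω * Real.log c) := by
  by_contra hne
  set Δ := c * Real.sin θ - |c| * Real.sin (θ + ω * Real.log c) with hΔdef
  have hΔ : Δ ≠ 0 := sub_ne_zero.2 hne
  have hΔpos : 0 < |Δ| := abs_pos.2 hΔ
  have hC0 : 0 ≤ C := le_trans (abs_nonneg _) (H 1)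
  set T : ℝ := (8 * C + 8) / |Δ| with hTdef
  have hT : 0 < T := by positivity
  obtain ⟨n, hn⟩ := exists_nat_gt ((ω * Real.log T - θ) / (2 * Real.pi))
  set x : ℝ := Real.exp ((θ + 2 * Real.pi * n) / ω) with hxdef
  have hx : 0 < x := Real.exp_pos _
  have hlogx : Real.log x = (θ + 2 * Real.pi * n) / ω := Real.log_exp _
  have hωlogx : ω * Real.log x = θ + 2 * Real.pi * n := by
    rw [hlogx]; field_simp
  have hsin1 : Real.sin (ω * Real.log x) = Real.sin θ := by
    rw [hωlogx]
    have : θ + 2 * Real.pi * n = θ + (n : ℤ) * (2 * Real.pi) := by push_cast; ring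
    rw [this, Real.sin_add_int_mul_two_pi]
  have hsin2 : Real.sin (ω * Real.log (c * x)) = Real.sin (θ + ω * Real.log c) := by
    rw [Real.log_mul hc hx.ne', mul_add, hωlogx]
    have : ω * Real.log c + (θ + 2 * Real.pi * n)
        = (θ + ω * Real.log c) + (n : ℤ) * (2 * Real.pi) := by push_cast; ring
    rw [this, Real.sin_add_int_mul_two_pi]
  have hval : c * Gfun ω x - Gfun ω (c * x) = x / 8 * Δ := by
    simp only [Gfun, hsin1, hsin2, abs_of_pos hx, abs_mul, abs_of_pos hx]
    rw [hΔdef]; ring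
  have hbound := H x
  rw [hval, abs_mul, abs_of_pos (by positivity : (0:ℝ) < x / 8)] at hbound
  -- x > T
  have hxT : T < x := by
    have h2π : (0:ℝ) < 2 * Real.pi := by positivity
    have : ω * Real.log T - θ < 2 * Real.pi * n := by
      rw [div_lt_iff₀ h2π] at hn; linarith
    have hlt : Real.log T < (θ + 2 * Real.pi * n) / ω := by
      rw [lt_div_iff₀ hω]; linarith
    calc T = Real.exp (Real.log T) := (Real.exp_log hT).symm
      _ < x := by rw [hxdef]; exact Real.exp_lt_exp.2 hlt
  have : C + 1 ≤ C := by
    have h1 : (8 * C + 8) / |Δ| / 8 * |Δ| ≤ x / 8 * |Δ| := by gcongr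
    have h2 : (8 * C + 8) / |Δ| / 8 * |Δ| = C + 1 := by field_simp
    linarith
  linarith

lemma sqrt2_irrat_aux (p q : ℤ) (hq : (q:ℝ) ≠ 0) (h : Real.sqrt 2 * q = p) : False := by
  apply irrational_sqrt_two
  refine ⟨(p : ℚ) / (q : ℚ), ?_⟩
  push_cast
  rw [eq_comm, eq_div_iff hq]
  linarith

lemma cos_both_one {a : ℝ} (h1 : Real.cos a = 1) (h2 : Real.cos (Real.sqrt 2 * a) = 1) :
    a = 0 := by
  obtain ⟨n, hn⟩ := (Real.cos_eq_one_iff a).1 h1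
  obtain ⟨m, hm⟩ := (Real.cos_eq_one_iff _).1 h2
  by_contra ha
  have hn0 : (n:ℝ) ≠ 0 := by
    intro h0
    apply ha; rw [← hn, h0]; ring
  apply sqrt2_irrat_aux m n hn0
  have hπ : (0:ℝ) < Real.pi := Real.pi_pos
  have : Real.sqrt 2 * ((n:ℝ) * (2 * Real.pi)) = (m:ℝ) * (2 * Real.pi) := by
    rw [hn, hm]
  have h2π : (2 * Real.pi) ≠ 0 := by positivity
  field_simp at this
  nlinarith [this]

lemma cos_both_neg_one {a : ℝ} (h1 : Real.cos a = -1) (h2 : Real.cos (Real.sqrt 2 * a) = -1) :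
    False := by
  have half : ∀ b : ℝ, Real.cos b = -1 → ∃ k : ℤ, b = (2 * k + 1) * Real.pi := by
    intro b hb
    have hsq : Real.cos (b/2) ^ 2 = 0 := by
      have := Real.cos_sq (b/2)
      rw [show 2 * (b/2) = b by ring, hb] at this
      linarith
    have hz : Real.cos (b/2) = 0 := by
      have := sq_eq_zero_iff.1 hsq; exact this
    obtain ⟨k, hk⟩ := Real.cos_eq_zero_iff.1 hz
    exact ⟨k, by linarith⟩
  obtain ⟨k, hk⟩ := half a h1
  obtain ⟨m, hm⟩ := half _ h2
  have hπ : (0:ℝ) < Real.pi := Real.pi_pos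
  have hodd : ((2*k+1 : ℤ):ℝ) ≠ 0 := by
    intro h0
    have : (2*k+1 : ℤ) = 0 := by exact_mod_cast h0
    omega
  apply sqrt2_irrat_aux (2*m+1) (2*k+1) hodd
  have : Real.sqrt 2 * ((2 * (k:ℝ) + 1) * Real.pi) = (2 * (m:ℝ) + 1) * Real.pi := by
    rw [← hk, ← hm]
  push_cast
  have := mul_right_cancel₀ (ne_of_gt hπ) (by linarith : Real.sqrt 2 * (2 * (k:ℝ) + 1) * Real.pi = (2 * (m:ℝ) + 1) * Real.pi)
  linarith


end Aux

/-- The center of the group `QI(ℝ)` of quasi-isometry classes of the real line is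
trivial: any self-quasi-isometry of `ℝ` whose class commutes with every class is within
bounded distance of the identity. -/
theorem center_QI_real_trivial (f : ℝ → ℝ) (hf : IsQI f)
    (hcentral : ∀ g : ℝ → ℝ, IsQI g → Close (f ∘ g) (g ∘ f)) :
    Close f (id : ℝ → ℝ) := by

  obtain ⟨K, ⟨hK1, hKb⟩, -⟩ := hf
  have hKpos : (0:ℝ) < K := lt_trans one_pos hK1
  -- doubling constant
  obtain ⟨M₂, hM₂⟩ := hcentral (fun x => 2 * x) (isQI_mul two_ne_zero)
  have hM₂' : ∀ x : ℝ, |f (2 * x) - 2 * f x| ≤ M₂ := by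
    intro x
    have := hM₂ x
    simpa [Function.comp, Real.dist_eq] using this
  have hM₂0 : (0:ℝ) ≤ M₂ := le_trans dist_nonneg (hM₂ 0)
  -- iterated doubling
  have hiter : ∀ (n : ℕ) (x : ℝ), |f (2 ^ n * x) - 2 ^ n * f x| ≤ (2 ^ n - 1) * M₂ := by
    intro n
    induction n with
    | zero => intro x; simp
    | succ n ih =>
      intro x
      have h1 := hM₂' (2 ^ n * x)
      have h2 := ih x
      have e : (2:ℝ) ^ (n + 1) * x = 2 * (2 ^ n * x) := by ring
      have e2 : f (2 ^ (n+1) * x) - 2 ^ (n+1) * f x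
          = (f (2 * (2 ^ n * x)) - 2 * f (2 ^ n * x)) + 2 * (f (2 ^ n * x) - 2 ^ n * f x) := by
        rw [e]; ring
      calc |f (2 ^ (n+1) * x) - 2 ^ (n+1) * f x|
          ≤ |f (2 * (2 ^ n * x)) - 2 * f (2 ^ n * x)| + |2 * (f (2 ^ n * x) - 2 ^ n * f x)| := by
            rw [e2]; exact abs_add_le _ _
        _ ≤ M₂ + 2 * ((2 ^ n - 1) * M₂) := by
            rw [abs_mul]
            have : |(2:ℝ)| = 2 := by norm_num
            rw [this]
            gcongr
        _ = (2 ^ (n+1) - 1) * M₂ := by ring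
  -- the limit slope c
  set u : ℕ → ℝ := fun n => f (2 ^ n) / 2 ^ n with hudef
  have hcauchy : CauchySeq u := by
    apply cauchySeq_of_le_geometric (1/2) (M₂ / 2) (by norm_num)
    intro n
    have h := hM₂' (2 ^ n)
    have hpow : (0:ℝ) < 2 ^ (n+1) := by positivity
    rw [Real.dist_eq, hudef]
    have e : f (2 ^ n) / 2 ^ n - f (2 ^ (n+1)) / 2 ^ (n+1)
        = -(f (2 * 2 ^ n) - 2 * f (2 ^ n)) / 2 ^ (n+1) := by
      have : (2:ℝ) ^ (n+1) = 2 * 2 ^ n := by ring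
      rw [this]
      field_simp
      ring
    rw [e, abs_div, abs_neg, abs_of_pos hpow]
    rw [div_le_iff₀ hpow]
    have h2n : ((2:ℝ)) ^ n ≠ 0 := by positivity
    have : M₂ / 2 * (1/2) ^ n * 2 ^ (n+1) = M₂ := by
      rw [div_pow, one_pow, pow_succ]
      field_simp
    rw [this]
    exact h
  obtain ⟨c, hc⟩ := cauchySeq_tendsto_of_complete hcauchy
  -- pointwise limits
  have hlim : ∀ x : ℝ, Tendsto (fun n : ℕ => f (2 ^ n * x) / 2 ^ n) atTop (nhds (c * x)) := by
    intro x
    rcases eq_or_ne x 0 with rfl | hx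
    · have h1 : Tendsto (fun n : ℕ => f 0 * (1/2) ^ n) atTop (nhds 0) := by
        have := tendsto_pow_atTop_nhds_zero_of_lt_one (by norm_num : (0:ℝ) ≤ 1/2) (by norm_num)
        simpa using this.const_mul (f 0)
      have he : (fun n : ℕ => f (2 ^ n * 0) / 2 ^ n) = fun n : ℕ => f 0 * (1/2) ^ n := by
        funext n
        rw [mul_zero]
        rw [div_eq_mul_inv, ← inv_pow]
        norm_num
      rw [he, mul_zero]
      exact h1
    · obtain ⟨Mx, hMx⟩ := hcentral (fun y => x * y) (isQI_mul hx)
      have hMx' : ∀ y : ℝ, |f (x * y) - x * f y| ≤ Mx := by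
        intro y
        have := hMx y
        simpa [Function.comp, Real.dist_eq] using this
      have hMx0 : (0:ℝ) ≤ Mx := le_trans dist_nonneg (hMx 0)
      have hdiff : Tendsto (fun n : ℕ => f (2 ^ n * x) / 2 ^ n - x * u n) atTop (nhds 0) := by
        apply squeeze_zero_norm (a := fun n : ℕ => Mx * (1/2) ^ n)
        · intro n
          have hpow : (0:ℝ) < 2 ^ n := by positivity
          have e : f (2 ^ n * x) / 2 ^ n - x * u n = (f (x * 2 ^ n) - x * f (2 ^ n)) / 2 ^ n := by
            rw [hudef, mul_comm x ((2:ℝ) ^ n)]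
            field_simp
          rw [Real.norm_eq_abs, e, abs_div, abs_of_pos hpow, div_le_iff₀ hpow]
          have : Mx * (1/2) ^ n * 2 ^ n = Mx := by
            rw [mul_assoc, ← mul_pow]; norm_num
          rw [this]
          exact hMx' (2 ^ n)
        · have := tendsto_pow_atTop_nhds_zero_of_lt_one (by norm_num : (0:ℝ) ≤ 1/2) (by norm_num)
          simpa using this.const_mul Mx
      have hxu : Tendsto (fun n : ℕ => x * u n) atTop (nhds (x * c)) := hc.const_mul x
      have := hdiff.add hxu
      simp only [zero_add] at this
      have he : (fun n : ℕ => f (2 ^ n * x) / 2 ^ n - x * u n + x * u n)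
          = fun n : ℕ => f (2 ^ n * x) / 2 ^ n := by funext n; ring
      rw [he] at this
      rwa [mul_comm x c] at this
  -- f is close to x ↦ c * x
  have hclose : ∀ x : ℝ, |f x - c * x| ≤ M₂ := by
    intro x
    have hseq : ∀ n : ℕ, |f (2 ^ n * x) / 2 ^ n - f x| ≤ M₂ := by
      intro n
      have hpow : (0:ℝ) < 2 ^ n := by positivity
      have e : f (2 ^ n * x) / 2 ^ n - f x = (f (2 ^ n * x) - 2 ^ n * f x) / 2 ^ n := by
        field_simp
      rw [e, abs_div, abs_of_pos hpow, div_le_iff₀ hpow]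
      calc |f (2 ^ n * x) - 2 ^ n * f x| ≤ (2 ^ n - 1) * M₂ := hiter n x
        _ ≤ M₂ * 2 ^ n := by nlinarith [hM₂0, hpow]
    have htend : Tendsto (fun n : ℕ => |f (2 ^ n * x) / 2 ^ n - f x|) atTop (nhds (|c * x - f x|)) :=
      ((hlim x).sub_const (f x)).abs
    have := le_of_tendsto htend (Filter.Eventually.of_forall hseq)
    rwa [abs_sub_comm] at this
  -- c is nonzero
  have hc0 : c ≠ 0 := by
    intro h0
    rw [h0] at hclose
    simp only [zero_mul, sub_zero] at hclose
    set x₀ : ℝ := K * (K + 2 * M₂ + 1) with hx₀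
    have hx₀pos : 0 < x₀ := by positivity
    have hlow := (hKb x₀ 0).1
    have : dist x₀ 0 / K - K ≤ 2 * M₂ := by
      calc dist x₀ 0 / K - K ≤ dist (f x₀) (f 0) := hlow
        _ ≤ |f x₀| + |f 0| := by rw [Real.dist_eq]; exact (abs_sub _ _)
        _ ≤ M₂ + M₂ := add_le_add (hclose x₀) (hclose 0)
        _ = 2 * M₂ := by ring
    rw [Real.dist_eq, sub_zero, abs_of_pos hx₀pos, hx₀] at this
    have hKne : K ≠ 0 := ne_of_gt hKpos
    have he : K * (K + 2 * M₂ + 1) / K = K + 2 * M₂ + 1 := by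
      field_simp
    rw [he] at this
    linarith
  -- commutator bound with Gfun, and the resulting trigonometric identity
  have hH : ∀ ω : ℝ, 0 < ω → ω < 3 →
      ∀ θ : ℝ, c * Real.sin θ = |c| * Real.sin (θ + ω * Real.log c) := by
    intro ω hω hω3
    obtain ⟨Mg, hMg⟩ := hcentral (Gfun ω) (isQI_Gfun hω.le hω3)
    have hMg' : ∀ x : ℝ, |f (Gfun ω x) - Gfun ω (f x)| ≤ Mg := by
      intro x
      have := hMg x
      simpa [Function.comp, Real.dist_eq] using this
    have hC : ∀ x : ℝ, |c * Gfun ω x - Gfun ω (c * x)| ≤ M₂ + Mg + 3/2 * M₂ := by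
      intro x
      have h1 : |c * Gfun ω x - f (Gfun ω x)| ≤ M₂ := by
        have := hclose (Gfun ω x)
        rwa [abs_sub_comm]
      have h2 := hMg' x
      have h3 : |Gfun ω (f x) - Gfun ω (c * x)| ≤ 3/2 * M₂ := by
        have hb := (Gfun_bilip hω.le hω3 (f x) (c * x)).2
        have hcx := hclose x
        calc |Gfun ω (f x) - Gfun ω (c * x)| ≤ 3/2 * |f x - c * x| := hb
          _ ≤ 3/2 * M₂ := by linarith
      have e : c * Gfun ω x - Gfun ω (c * x)
          = (c * Gfun ω x - f (Gfun ω x)) + (f (Gfun ω x) - Gfun ω (f x))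
            + (Gfun ω (f x) - Gfun ω (c * x)) := by ring
      calc |c * Gfun ω x - Gfun ω (c * x)|
          ≤ |c * Gfun ω x - f (Gfun ω x)| + |f (Gfun ω x) - Gfun ω (f x)|
            + |Gfun ω (f x) - Gfun ω (c * x)| := by
            rw [e]
            exact (abs_add_le _ _).trans (by gcongr; exact abs_add_le _ _)
        _ ≤ M₂ + Mg + 3/2 * M₂ := by linarith
    exact Gfun_key hω hc0 hC
  have hsqrt2pos : (0:ℝ) < Real.sqrt 2 := Real.sqrt_pos.2 (by norm_num)
  have hsqrt2lt : Real.sqrt 2 < 3 := by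
    nlinarith [Real.sq_sqrt (by norm_num : (0:ℝ) ≤ 2), Real.sqrt_nonneg 2]
  have k1 := hH 1 one_pos (by norm_num) (Real.pi / 2)
  have k2 := hH (Real.sqrt 2) hsqrt2pos hsqrt2lt (Real.pi / 2)
  rw [Real.sin_pi_div_two, mul_one, one_mul,
    add_comm (Real.pi / 2) (Real.log c), Real.sin_add_pi_div_two] at k1
  rw [Real.sin_pi_div_two, mul_one,
    add_comm (Real.pi / 2) (Real.sqrt 2 * Real.log c), Real.sin_add_pi_div_two] at k2
  rcases hc0.lt_or_gt with hneg | hpos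
  · exfalso
    have habs : |c| = -c := abs_of_neg hneg
    rw [habs] at k1 k2
    have hc1 : Real.cos (Real.log c) = -1 := by
      have h : c * (1 + Real.cos (Real.log c)) = 0 := by linarith [k1]
      rcases mul_eq_zero.1 h with h' | h'
      · exact absurd h' hc0
      · linarith
    have hc2 : Real.cos (Real.sqrt 2 * Real.log c) = -1 := by
      have h : c * (1 + Real.cos (Real.sqrt 2 * Real.log c)) = 0 := by linarith [k2]
      rcases mul_eq_zero.1 h with h' | h'
      · exact absurd h' hc0
      · linarith
    exact cos_both_neg_one hc1 hc2
  · have habs : |c| = c := abs_of_pos hpos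
    rw [habs] at k1 k2
    have hc1 : Real.cos (Real.log c) = 1 := by
      have h : c * (1 - Real.cos (Real.log c)) = 0 := by linarith [k1]
      rcases mul_eq_zero.1 h with h' | h'
      · exact absurd h' hc0
      · linarith
    have hc2 : Real.cos (Real.sqrt 2 * Real.log c) = 1 := by
      have h : c * (1 - Real.cos (Real.sqrt 2 * Real.log c)) = 0 := by linarith [k2]
      rcases mul_eq_zero.1 h with h' | h'
      · exact absurd h' hc0
      · linarith
    have ha0 : Real.log c = 0 := cos_both_one hc1 hc2
    have hc1' : c = 1 := by
      rw [← Real.exp_log hpos, ha0, Real.exp_zero]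
    refine ⟨M₂, fun x => ?_⟩
    have := hclose x
    rw [hc1', one_mul] at this
    rwa [Real.dist_eq]
end
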